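/- arXiv:1906.01613 — 5 statements merged into one kernel-verified Lean document; each statement's English description precedes it below -/
import Mathlib

section
/- On a finite connected network with a proper subset U ⊂ V, the space ℓ²₋(E⃗) decomposes as the orthogonal direct sum ⋆_U ⊕ I_U ⊕ ◇, where ⋆_U is the span of stars at vertices of U, I_U is the space of discrete gradients of functions harmonic on U, and ◇ is the cycle space. -/
open Finset

variable {V E : Type*} [Fintype V] [Fintype E] [DecidableEq V] [DecidableEq E]

/-- The elementary antisymmetric edge function `χᵉ = 1_{e} − 1_{−e}`. -/
noncomputable def chiFun (rev : E → E) (e : E) : E → ℝ :=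
  fun f => if f = e then 1 else if f = rev e then -1 else 0

/-- The star at a vertex `x`: `⋆_x = ∑_{e⁻ = x} c(e) χᵉ`. -/
noncomputable def starFun (rev : E → E) (tail : E → V) (c : E → ℝ) (x : V) : E → ℝ :=
  fun f => ∑ e ∈ univ.filter (fun e => tail e = x), c e * chiFun rev e f

/-- The inner product `(θ,φ)_r = (1/2) ∑_e θ(e) φ(e) r(e)` with `r = 1/c`. -/
noncomputable def rInner (c : E → ℝ) (θ φ : E → ℝ) : ℝ :=
  (1 / 2) * ∑ e, θ e * φ e * (c e)⁻¹

/-- The space of antisymmetric edge functions `ℓ²₋(E⃗)`. -/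
def antisymSpace (rev : E → E) : Submodule ℝ (E → ℝ) where
  carrier := {θ | ∀ e, θ (rev e) = - θ e}
  add_mem' := by
    intro a b ha hb e
    simp only [Pi.add_apply, ha e, hb e]; ring
  zero_mem' := by intro e; simp
  smul_mem' := by
    intro r a ha e
    simp only [Pi.smul_apply, ha e, smul_eq_mul]; ring

/-- The span `⋆_U` of the stars at vertices of `U`. -/
noncomputable def starSpaceOn (rev : E → E) (tail : E → V) (c : E → ℝ)
    (U : Finset V) : Submodule ℝ (E → ℝ) :=
  Submodule.span ℝ (starFun rev tail c '' ↑U)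

/-- The cycle space: span of the indicator flows of directed cycles. -/
noncomputable def cycleSpace (rev : E → E) (tail head : E → V) :
    Submodule ℝ (E → ℝ) :=
  Submodule.span ℝ
    {θ | ∃ (n : ℕ) (γ : Fin (n + 1) → E),
      (∀ i, head (γ i) = tail (γ (i + 1))) ∧ θ = ∑ i, chiFun rev (γ i)}

/-- `I_U`: the space of discrete gradients of functions discrete harmonic on `U`. -/
noncomputable def currentSpace (tail head : E → V) (c : E → ℝ) (U : Finset V) :
    Submodule ℝ (E → ℝ) :=
  Submodule.span ℝ
    {θ | ∃ h : V → ℝ,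
      (∀ x ∈ U, h x * ∑ e ∈ univ.filter (fun e => tail e = x), c e =
        ∑ e ∈ univ.filter (fun e => tail e = x), c e * h (head e)) ∧
      θ = fun e => c e * (h (head e) - h (tail e))}

/-! ### Auxiliary machinery -/

/-- The bilinear form associated to `rInner`. -/
noncomputable def rForm (c : E → ℝ) : (E → ℝ) →ₗ[ℝ] (E → ℝ) →ₗ[ℝ] ℝ :=
  LinearMap.mk₂ ℝ (rInner c)
    (fun m₁ m₂ n => by
      simp only [rInner]
      rw [← mul_add, ← Finset.sum_add_distrib]
      congr 1
      exact Finset.sum_congr rfl fun e _ => by simp only [Pi.add_apply]; ring)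
    (fun a m n => by
      have h : ∀ e ∈ (univ : Finset E), (a • m) e * n e * (c e)⁻¹ =
          a * (m e * n e * (c e)⁻¹) :=
        fun e _ => by simp only [Pi.smul_apply, smul_eq_mul]; ring
      simp only [rInner, smul_eq_mul]
      rw [Finset.sum_congr rfl h, ← Finset.mul_sum]
      ring)
    (fun m n₁ n₂ => by
      simp only [rInner]
      rw [← mul_add, ← Finset.sum_add_distrib]
      congr 1
      exact Finset.sum_congr rfl fun e _ => by simp only [Pi.add_apply]; ring)
    (fun a m n => by
      have h : ∀ e ∈ (univ : Finset E), m e * (a • n) e * (c e)⁻¹ =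
          a * (m e * n e * (c e)⁻¹) :=
        fun e _ => by simp only [Pi.smul_apply, smul_eq_mul]; ring
      simp only [rInner, smul_eq_mul]
      rw [Finset.sum_congr rfl h, ← Finset.mul_sum]
      ring)

lemma rForm_apply (c : E → ℝ) (θ φ : E → ℝ) : rForm c θ φ = rInner c θ φ := rfl

lemma rInner_comm (c : E → ℝ) (θ φ : E → ℝ) : rInner c θ φ = rInner c φ θ := by
  simp only [rInner]
  congr 1
  exact Finset.sum_congr rfl fun e _ => by ring

lemma rInner_self_nonneg (c : E → ℝ) (hc : ∀ e, 0 < c e) (θ : E → ℝ) :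
    0 ≤ rInner c θ θ := by
  apply mul_nonneg (by norm_num)
  apply Finset.sum_nonneg
  intro e _
  have : θ e * θ e * (c e)⁻¹ = θ e ^ 2 * (c e)⁻¹ := by ring
  rw [this]
  exact mul_nonneg (sq_nonneg _) (inv_nonneg.mpr (hc e).le)

lemma eq_zero_of_rInner_self (c : E → ℝ) (hc : ∀ e, 0 < c e) (θ : E → ℝ)
    (h : rInner c θ θ = 0) : θ = 0 := by
  have hsum : ∑ e, θ e * θ e * (c e)⁻¹ = 0 := by
    have := h
    simp only [rInner] at this
    linarith
  have hterm : ∀ e ∈ (univ : Finset E), θ e * θ e * (c e)⁻¹ = 0 := by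
    rw [← Finset.sum_eq_zero_iff_of_nonneg]
    · exact hsum
    · intro e _
      have : θ e * θ e * (c e)⁻¹ = θ e ^ 2 * (c e)⁻¹ := by ring
      rw [this]
      exact mul_nonneg (sq_nonneg _) (inv_nonneg.mpr (hc e).le)
  funext e
  have he := hterm e (mem_univ e)
  have hci : (c e)⁻¹ ≠ 0 := inv_ne_zero (hc e).ne'
  have : θ e * θ e = 0 := by
    rcases mul_eq_zero.mp he with h' | h'
    · exact h'
    · exact absurd h' hci
  have := mul_self_eq_zero.mp this
  simpa using this

lemma rev_inj (rev : E → E) (hrev : ∀ e, rev (rev e) = e) {a b : E}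
    (h : rev a = rev b) : a = b := by
  rw [← hrev a, h, hrev]

lemma chiFun_antisym (rev : E → E) (hrev : ∀ e, rev (rev e) = e)
    (hrevne : ∀ e, rev e ≠ e) (e : E) :
    chiFun rev e ∈ antisymSpace rev := by
  intro f
  simp only [chiFun]
  by_cases h1 : f = e
  · subst h1
    rw [if_neg (hrevne f), if_pos rfl, if_pos rfl]
  · by_cases h2 : f = rev e
    · subst h2
      rw [if_neg h1, if_pos rfl, hrev, if_pos rfl]
      norm_num
    · have hne1 : rev f ≠ e := fun h => h2 (by rw [← h, hrev])
      have hne2 : rev f ≠ rev e := fun h => h1 (rev_inj rev hrev h)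
      rw [if_neg h1, if_neg h2, if_neg hne1, if_neg hne2]
      norm_num

lemma getElem_idx_congr {α : Type*} {l : List α} {i j : ℕ} (h : i = j)
    (hi : i < l.length) : l[i]'hi = l[j]'(h ▸ hi) := by subst h; rfl

lemma chi_mul_sum (rev : E → E) (hrevne : ∀ e, rev e ≠ e) (e : E) (g : E → ℝ) :
    ∑ f, chiFun rev e f * g f = g e - g (rev e) := by
  have key : ∀ f, chiFun rev e f * g f =
      (if f = e then g f else 0) - (if f = rev e then g f else 0) := by
    intro f
    simp only [chiFun]
    by_cases h1 : f = e
    · have hne : f ≠ rev e := by rw [h1]; exact fun h => hrevne e h.symm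
      rw [if_pos h1, if_pos h1, if_neg hne]
      ring
    · by_cases h2 : f = rev e
      · rw [if_neg h1, if_pos h2, if_neg h1, if_pos h2]
        ring
      · rw [if_neg h1, if_neg h2, if_neg h1, if_neg h2]
        ring
  rw [Finset.sum_congr rfl (fun f _ => key f), Finset.sum_sub_distrib,
    Finset.sum_ite_eq' univ e g, Finset.sum_ite_eq' univ (rev e) g]
  simp

lemma rInner_chi_right (rev : E → E) (hrevne : ∀ e, rev e ≠ e) (c : E → ℝ)
    (hcrev : ∀ e, c (rev e) = c e) (θ : E → ℝ) (hθ : ∀ f, θ (rev f) = - θ f) (e : E) :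
    rInner c θ (chiFun rev e) = θ e * (c e)⁻¹ := by
  simp only [rInner]
  have : ∑ f, θ f * chiFun rev e f * (c f)⁻¹ =
      ∑ f, chiFun rev e f * (θ f * (c f)⁻¹) :=
    Finset.sum_congr rfl fun f _ => by ring
  rw [this, chi_mul_sum rev hrevne e (fun f => θ f * (c f)⁻¹), hθ e, hcrev e]
  ring

lemma rInner_chi_left (rev : E → E) (hrevne : ∀ e, rev e ≠ e) (c : E → ℝ)
    (hcrev : ∀ e, c (rev e) = c e) (φ : E → ℝ) (hφ : ∀ f, φ (rev f) = - φ f) (e : E) :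
    rInner c (chiFun rev e) φ = φ e * (c e)⁻¹ := by
  rw [rInner_comm]
  exact rInner_chi_right rev hrevne c hcrev φ hφ e

lemma starFun_eq_sum (rev : E → E) (tail : E → V) (c : E → ℝ) (x : V) :
    starFun rev tail c x =
      ∑ e ∈ univ.filter (fun e => tail e = x), c e • chiFun rev e := by
  funext f
  simp [starFun, Finset.sum_apply]

lemma rInner_star (rev : E → E) (hrevne : ∀ e, rev e ≠ e) (tail : E → V)
    (c : E → ℝ) (hc : ∀ e, 0 < c e) (hcrev : ∀ e, c (rev e) = c e) (x : V)
    (φ : E → ℝ) (hφ : ∀ f, φ (rev f) = - φ f) :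
    rInner c (starFun rev tail c x) φ =
      ∑ e ∈ univ.filter (fun e => tail e = x), φ e := by
  rw [← rForm_apply, starFun_eq_sum, map_sum, LinearMap.sum_apply]
  apply Finset.sum_congr rfl
  intro e _
  rw [map_smul, LinearMap.smul_apply, rForm_apply,
    rInner_chi_left rev hrevne c hcrev φ hφ e, smul_eq_mul]
  rw [mul_comm (φ e), ← mul_assoc, mul_inv_cancel₀ (hc e).ne', one_mul]

lemma gradFun_antisym (rev : E → E) (hrev : ∀ e, rev (rev e) = e)
    (tail head : E → V) (htail_rev : ∀ e, tail (rev e) = head e)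
    (c : E → ℝ) (hcrev : ∀ e, c (rev e) = c e) (h : V → ℝ) :
    (fun e => c e * (h (head e) - h (tail e))) ∈ antisymSpace rev := by
  intro e
  have hhead_rev : head (rev e) = tail e := by
    rw [← htail_rev (rev e), hrev]
  simp only [htail_rev, hhead_rev, hcrev]
  ring

lemma cycleGen_antisym (rev : E → E) (hrev : ∀ e, rev (rev e) = e)
    (hrevne : ∀ e, rev e ≠ e) {n : ℕ} (γ : Fin (n + 1) → E) :
    (∑ i, chiFun rev (γ i)) ∈ antisymSpace rev :=
  Submodule.sum_mem _ fun i _ => chiFun_antisym rev hrev hrevne (γ i)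

lemma starFun_antisym (rev : E → E) (hrev : ∀ e, rev (rev e) = e)
    (hrevne : ∀ e, rev e ≠ e) (tail : E → V) (c : E → ℝ) (x : V) :
    starFun rev tail c x ∈ antisymSpace rev := by
  rw [starFun_eq_sum]
  exact Submodule.sum_mem _ fun e _ =>
    Submodule.smul_mem _ _ (chiFun_antisym rev hrev hrevne e)

lemma sum_fin_shift {n : ℕ} (g : Fin (n + 1) → ℝ) : ∑ i, g (i + 1) = ∑ i, g i :=
  Fintype.sum_equiv (Equiv.addRight 1) (fun i => g (i + 1)) g (fun i => rfl)

lemma chi_filter_sum (rev : E → E) (hrev : ∀ e, rev (rev e) = e)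
    (hrevne : ∀ e, rev e ≠ e) (tail head : E → V)
    (htail_rev : ∀ e, tail (rev e) = head e) (g : E) (x : V) :
    ∑ e ∈ univ.filter (fun e => tail e = x), chiFun rev g e =
      (if tail g = x then (1 : ℝ) else 0) - (if head g = x then 1 else 0) := by
  have key : ∀ e, chiFun rev g e =
      (if e = g then (1:ℝ) else 0) - (if e = rev g then 1 else 0) := by
    intro e
    simp only [chiFun]
    by_cases h1 : e = g
    · have hne : e ≠ rev g := by rw [h1]; exact fun h => hrevne g h.symm
      rw [if_pos h1, if_pos h1, if_neg hne]
      ring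
    · by_cases h2 : e = rev g
      · rw [if_neg h1, if_pos h2, if_neg h1, if_pos h2]
        ring
      · rw [if_neg h1, if_neg h2, if_neg h1, if_neg h2]
        ring
  rw [Finset.sum_congr rfl (fun e _ => key e), Finset.sum_sub_distrib]
  rw [Finset.sum_ite_eq' _ g (fun _ => (1:ℝ)), Finset.sum_ite_eq' _ (rev g) (fun _ => (1:ℝ))]
  simp only [Finset.mem_filter, mem_univ, true_and, htail_rev]

/-! ### Walks -/

def IsWalk (tail head : E → V) : V → V → List E → Prop
  | x, y, [] => x = y
  | x, y, e :: l => tail e = x ∧ IsWalk tail head (head e) y l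

noncomputable def wSum (c θ : E → ℝ) (l : List E) : ℝ :=
  (l.map (fun e => θ e * (c e)⁻¹)).sum

lemma wSum_nil (c θ : E → ℝ) : wSum c θ [] = 0 := rfl

lemma wSum_cons (c θ : E → ℝ) (e : E) (l : List E) :
    wSum c θ (e :: l) = θ e * (c e)⁻¹ + wSum c θ l := by
  simp [wSum]

lemma wSum_append (c θ : E → ℝ) (l m : List E) :
    wSum c θ (l ++ m) = wSum c θ l + wSum c θ m := by
  simp [wSum]

lemma walk_append (tail head : E → V) {x y z : V} {l m : List E}
    (hl : IsWalk tail head x y l) (hm : IsWalk tail head y z m) :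
    IsWalk tail head x z (l ++ m) := by
  induction l generalizing x with
  | nil => cases hl; simpa using hm
  | cons e l ih =>
    obtain ⟨h1, h2⟩ := hl
    exact ⟨h1, ih h2⟩

lemma walk_rev (rev : E → E) (hrev : ∀ e, rev (rev e) = e)
    (tail head : E → V) (htail_rev : ∀ e, tail (rev e) = head e)
    {x y : V} {l : List E} (hl : IsWalk tail head x y l) :
    IsWalk tail head y x (l.reverse.map rev) := by
  induction l generalizing x with
  | nil => cases hl; exact rfl
  | cons e l ih =>
    obtain ⟨h1, h2⟩ := hl
    have hh : head (rev e) = tail e := by rw [← htail_rev (rev e), hrev]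
    have hsingle : IsWalk tail head (head e) x [rev e] := by
      refine ⟨htail_rev e, ?_⟩
      show head (rev e) = x
      rw [hh, h1]
    have := walk_append tail head (ih h2) hsingle
    simpa using this

lemma wSum_rev (rev : E → E) (c θ : E → ℝ) (hcrev : ∀ e, c (rev e) = c e)
    (hθ : ∀ f, θ (rev f) = - θ f) (l : List E) :
    wSum c θ (l.reverse.map rev) = - wSum c θ l := by
  induction l with
  | nil => simp [wSum]
  | cons e l ih =>
    have : (e :: l).reverse.map rev = l.reverse.map rev ++ [rev e] := by simp
    rw [this, wSum_append, ih, wSum_cons, wSum_cons, wSum_nil, hθ e, hcrev e]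
    ring

lemma walk_exists (tail head : E → V)
    (hconn : ∀ x y : V,
      Relation.ReflTransGen (fun a b => ∃ e, tail e = a ∧ head e = b) x y)
    (x y : V) : ∃ l, IsWalk tail head x y l := by
  have h := hconn x y
  induction h with
  | refl => exact ⟨[], rfl⟩
  | tail _ hbc ih =>
    obtain ⟨l, hl⟩ := ih
    obtain ⟨e, he1, he2⟩ := hbc
    refine ⟨l ++ [e], walk_append tail head hl ⟨he1, ?_⟩⟩
    exact he2

lemma walk_first (tail head : E → V) {x y : V} {l : List E}
    (hl : IsWalk tail head x y l) (h : 0 < l.length) :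
    tail (l[0]'h) = x := by
  cases l with
  | nil => simp at h
  | cons e l => exact hl.1

lemma walk_chain (tail head : E → V) {y : V} :
    ∀ {l : List E} {x : V}, IsWalk tail head x y l →
      ∀ i : ℕ, (h : i + 1 < l.length) →
        head (l[i]'(by omega)) = tail (l[i+1]'h) := by
  intro l
  induction l with
  | nil => intro x _ i h; simp at h
  | cons e l ih =>
    intro x hl i h
    obtain ⟨h1, h2⟩ := hl
    cases i with
    | zero =>
      have hlen : 0 < l.length := by simpa using Nat.lt_of_succ_lt_succ h
      show head e = tail ((e :: l)[1]'h)
      have : (e :: l)[1]'h = l[0]'hlen := rfl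
      rw [this]
      exact (walk_first tail head h2 hlen).symm
    | succ i =>
      have h' : i + 1 < l.length := by simpa using Nat.lt_of_succ_lt_succ h
      exact ih h2 i h'

lemma walk_last (tail head : E → V) {y : V} :
    ∀ {l : List E} {x : V}, IsWalk tail head x y l →
      (h : 0 < l.length) → head (l[l.length - 1]'(by omega)) = y := by
  intro l
  induction l with
  | nil => intro x _ h; simp at h
  | cons e l ih =>
    intro x hl _
    obtain ⟨h1, h2⟩ := hl
    cases l with
    | nil => exact h2
    | cons f m =>
      have hlen : 0 < (f :: m).length := by simp
      have key := ih h2 hlen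
      have h3 : (e :: f :: m).length - 1 = ((f :: m).length - 1) + 1 := by simp
      have hidx : (e :: f :: m)[(e :: f :: m).length - 1]'(by simp) =
          (f :: m)[(f :: m).length - 1]'(by simp) :=
        getElem_idx_congr h3 _
      rw [hidx]
      exact key

lemma list_sum_get (f : E → ℝ) (l : List E) :
    (l.map f).sum = ∑ i : Fin l.length, f (l.get i) := by
  induction l with
  | nil => simp
  | cons e l ih =>
    rw [List.map_cons, List.sum_cons, ih]
    simp only [List.length_cons]
    rw [Fin.sum_univ_succ]
    rfl

/-- A function orthogonal to all stars on `U` and to all cycles is in `I_U`. -/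
lemma mem_current_of_ortho (rev : E → E) (hrev : ∀ e, rev (rev e) = e)
    (hrevne : ∀ e, rev e ≠ e) (tail head : E → V)
    (htail_rev : ∀ e, tail (rev e) = head e)
    (c : E → ℝ) (hc : ∀ e, 0 < c e) (hcrev : ∀ e, c (rev e) = c e)
    (hconn : ∀ x y : V,
      Relation.ReflTransGen (fun a b => ∃ e, tail e = a ∧ head e = b) x y)
    (U : Finset V) (x₀ : V) (θ : E → ℝ) (hθa : ∀ f, θ (rev f) = - θ f)
    (hstar : ∀ x ∈ U, rInner c (starFun rev tail c x) θ = 0)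
    (hcyc : ∀ (n : ℕ) (γ : Fin (n + 1) → E),
      (∀ i, head (γ i) = tail (γ (i + 1))) → rInner c θ (∑ i, chiFun rev (γ i)) = 0) :
    θ ∈ currentSpace tail head c U := by
  -- closed walks have zero weighted sum
  have hclosed : ∀ (l : List E) (x : V), IsWalk tail head x x l → wSum c θ l = 0 := by
    intro l x hl
    cases hl' : l with
    | nil => exact wSum_nil c θ
    | cons e m =>
      subst hl'
      have hLL : (e :: m).length = m.length + 1 := by simp
      have hLlen : 0 < (e :: m).length := by simp
      let γ : Fin (m.length + 1) → E :=
        fun i => (e :: m)[(i : ℕ)]'(by rw [hLL]; exact i.isLt)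
      have hγ : ∀ (i : Fin (m.length + 1)) (h : (i : ℕ) < (e :: m).length),
          γ i = (e :: m)[(i : ℕ)]'h := fun i h => rfl
      have hcyclic : ∀ i : Fin (m.length + 1), head (γ i) = tail (γ (i + 1)) := by
        intro i
        by_cases hi : i = Fin.last m.length
        · subst hi
          have hv1 : ((Fin.last m.length + 1 : Fin (m.length + 1)) : ℕ) = 0 := by
            simp [Fin.val_add_one]
          rw [hγ (Fin.last m.length) (by rw [hLL]; exact (Fin.last m.length).isLt),
            hγ (Fin.last m.length + 1) (by rw [hLL]; exact (Fin.last m.length + 1).isLt)]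
          have e1 : (e :: m)[((Fin.last m.length + 1 : Fin (m.length + 1)) : ℕ)]'(by
              rw [hLL]; exact (Fin.last m.length + 1).isLt) = (e :: m)[0]'hLlen :=
            getElem_idx_congr hv1 _
          have hv2 : ((Fin.last m.length : Fin (m.length + 1)) : ℕ) =
              (e :: m).length - 1 := by simp [Fin.last]
          have e2 : (e :: m)[((Fin.last m.length : Fin (m.length + 1)) : ℕ)]'(by
              rw [hLL]; exact (Fin.last m.length).isLt) =
              (e :: m)[(e :: m).length - 1]'(by omega) :=
            getElem_idx_congr hv2 _
          rw [e1, e2]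
          exact (walk_last tail head hl hLlen).trans
            (walk_first tail head hl hLlen).symm
        · have hi' : (i : ℕ) < m.length := by
            have h1 := i.isLt
            have hne : (i : ℕ) ≠ m.length := fun h => hi (Fin.ext h)
            omega
          have hv : ((i + 1 : Fin (m.length + 1)) : ℕ) = (i : ℕ) + 1 := by
            rw [Fin.val_add_one, if_neg hi]
          rw [hγ i (by omega), hγ (i + 1) (by rw [hLL]; exact (i + 1).isLt)]
          have e1 : (e :: m)[((i + 1 : Fin (m.length + 1)) : ℕ)]'(by
              rw [hLL]; exact (i + 1).isLt) = (e :: m)[(i : ℕ) + 1]'(by omega) :=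
            getElem_idx_congr hv _
          rw [e1]
          exact walk_chain tail head hl (i : ℕ) (by omega)
      have h0 := hcyc m.length γ hcyclic
      rw [← rForm_apply, map_sum] at h0
      have hterm : ∀ i : Fin (m.length + 1),
          rForm c θ (chiFun rev (γ i)) = θ (γ i) * (c (γ i))⁻¹ := fun i =>
        rInner_chi_right rev hrevne c hcrev θ hθa (γ i)
      rw [Finset.sum_congr rfl (fun i _ => hterm i)] at h0
      have hws : wSum c θ (e :: m) = ∑ i : Fin (m.length + 1), θ (γ i) * (c (γ i))⁻¹ := by
        rw [wSum, list_sum_get]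
        exact (Fintype.sum_equiv (finCongr hLL.symm)
          (fun i => θ (γ i) * (c (γ i))⁻¹)
          (fun i => θ ((e :: m).get i) * (c ((e :: m).get i))⁻¹) (fun i => rfl)).symm
      rw [hws]
      exact h0
  -- uniqueness of walk sums
  have huniq : ∀ (x y : V) (p q : List E), IsWalk tail head x y p →
      IsWalk tail head x y q → wSum c θ p = wSum c θ q := by
    intro x y p q hp hq
    have hq' := walk_rev rev hrev tail head htail_rev hq
    have hw := walk_append tail head hp hq'
    have := hclosed _ _ hw
    rw [wSum_append, wSum_rev rev c θ hcrev hθa] at this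
    linarith
  -- the potential
  have hex : ∀ y, ∃ l, IsWalk tail head x₀ y l := fun y =>
    walk_exists tail head hconn x₀ y
  set h : V → ℝ := fun y => wSum c θ (hex y).choose with hdef
  have hgrad : ∀ e, h (head e) - h (tail e) = θ e * (c e)⁻¹ := by
    intro e
    have w1 := (hex (tail e)).choose_spec
    have w2 : IsWalk tail head x₀ (head e) ((hex (tail e)).choose ++ [e]) :=
      walk_append tail head w1 ⟨rfl, rfl⟩
    have := huniq _ _ _ _ (hex (head e)).choose_spec w2
    rw [wSum_append, wSum_cons, wSum_nil] at this
    simp only [hdef]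
    rw [this]
    ring
  have hθeq : θ = fun e => c e * (h (head e) - h (tail e)) := by
    funext e
    rw [hgrad e, mul_comm (θ e), ← mul_assoc, mul_inv_cancel₀ (hc e).ne', one_mul]
  -- harmonicity
  have hharm : ∀ x ∈ U, h x * ∑ e ∈ univ.filter (fun e => tail e = x), c e =
      ∑ e ∈ univ.filter (fun e => tail e = x), c e * h (head e) := by
    intro x hx
    have h0 := hstar x hx
    rw [rInner_star rev hrevne tail c hc hcrev x θ hθa] at h0
    have h1 : ∑ e ∈ univ.filter (fun e => tail e = x),
        (c e * h (head e) - c e * h x) = 0 := by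
      rw [← h0]
      apply Finset.sum_congr rfl
      intro e he
      have hte : tail e = x := (Finset.mem_filter.mp he).2
      simp only [hθeq]
      rw [hte]
      ring
    rw [Finset.sum_sub_distrib, ← Finset.sum_mul] at h1
    have : ∑ e ∈ univ.filter (fun e => tail e = x), c e * h x =
        (∑ e ∈ univ.filter (fun e => tail e = x), c e) * h x := by
      rw [Finset.sum_mul]
    linarith [h1]
  exact Submodule.subset_span ⟨h, hharm, hθeq⟩

/-- Orthogonality transfers from generators to spans. -/
lemma span_ortho (c : E → ℝ) (s t : Set (E → ℝ))
    (h : ∀ a ∈ s, ∀ b ∈ t, rInner c a b = 0) :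
    ∀ θ ∈ Submodule.span ℝ s, ∀ φ ∈ Submodule.span ℝ t, rInner c θ φ = 0 := by
  intro θ hθ φ hφ
  have h1 : ∀ a ∈ s, rForm c a φ = 0 := by
    intro a ha
    have hle : Submodule.span ℝ t ≤ LinearMap.ker (rForm c a) :=
      Submodule.span_le.mpr fun b hb => LinearMap.mem_ker.mpr (h a ha b hb)
    exact hle hφ
  have hle : Submodule.span ℝ s ≤ LinearMap.ker ((rForm c).flip φ) :=
    Submodule.span_le.mpr fun a ha => LinearMap.mem_ker.mpr (h1 a ha)
  exact hle hθ

/-- On a finite connected network with a proper subset `U ⊂ V`,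
`ℓ²₋(E⃗) = ⋆_U ⊕ I_U ⊕ ◇`, an orthogonal direct sum. -/
theorem stmt_3
    (rev : E → E) (hrev : ∀ e, rev (rev e) = e) (hrevne : ∀ e, rev e ≠ e)
    (tail head : E → V) (htail_rev : ∀ e, tail (rev e) = head e)
    (c : E → ℝ) (hc : ∀ e, 0 < c e) (hcrev : ∀ e, c (rev e) = c e)
    (hconn : ∀ x y : V,
      Relation.ReflTransGen (fun a b => ∃ e, tail e = a ∧ head e = b) x y)
    (U : Finset V) (hU : U ≠ univ) :
    (∀ θ ∈ starSpaceOn rev tail c U, ∀ φ ∈ currentSpace tail head c U,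
        rInner c θ φ = 0) ∧
    (∀ θ ∈ starSpaceOn rev tail c U, ∀ φ ∈ cycleSpace rev tail head,
        rInner c θ φ = 0) ∧
    (∀ θ ∈ currentSpace tail head c U, ∀ φ ∈ cycleSpace rev tail head,
        rInner c θ φ = 0) ∧
      starSpaceOn rev tail c U ⊔ currentSpace tail head c U ⊔
        cycleSpace rev tail head = antisymSpace rev := by
  have hhead_rev : ∀ e, head (rev e) = tail e := by
    intro e; rw [← htail_rev (rev e), hrev]
  -- generator orthogonality: stars vs currents
  have hgen1 : ∀ a ∈ starFun rev tail c '' ↑U,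
      ∀ b ∈ {θ : E → ℝ | ∃ h : V → ℝ,
        (∀ x ∈ U, h x * ∑ e ∈ univ.filter (fun e => tail e = x), c e =
          ∑ e ∈ univ.filter (fun e => tail e = x), c e * h (head e)) ∧
        θ = fun e => c e * (h (head e) - h (tail e))}, rInner c a b = 0 := by
    rintro a ⟨x, hx, rfl⟩ b ⟨h, hharm, rfl⟩
    have hb : ∀ f, (fun e => c e * (h (head e) - h (tail e))) (rev f) =
        - (fun e => c e * (h (head e) - h (tail e))) f :=
      gradFun_antisym rev hrev tail head htail_rev c hcrev h
    rw [rInner_star rev hrevne tail c hc hcrev x _ hb]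
    have hsub : ∀ e ∈ univ.filter (fun e => tail e = x),
        c e * (h (head e) - h (tail e)) = c e * h (head e) - c e * h x := by
      intro e he
      have hte : tail e = x := (Finset.mem_filter.mp he).2
      rw [hte]; ring
    rw [Finset.sum_congr rfl hsub, Finset.sum_sub_distrib, ← Finset.sum_mul]
    have := hharm x (by exact_mod_cast hx)
    linarith
  -- generator orthogonality: stars vs cycles
  have hgen2 : ∀ a ∈ starFun rev tail c '' ↑U,
      ∀ b ∈ {θ : E → ℝ | ∃ (n : ℕ) (γ : Fin (n + 1) → E),
        (∀ i, head (γ i) = tail (γ (i + 1))) ∧ θ = ∑ i, chiFun rev (γ i)},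
      rInner c a b = 0 := by
    rintro a ⟨x, hx, rfl⟩ b ⟨n, γ, hγ, rfl⟩
    have hb : ∀ f, (∑ i, chiFun rev (γ i)) (rev f) = - (∑ i, chiFun rev (γ i)) f :=
      cycleGen_antisym rev hrev hrevne γ
    rw [rInner_star rev hrevne tail c hc hcrev x _ hb]
    have : ∀ e ∈ univ.filter (fun e => tail e = x),
        (∑ i, chiFun rev (γ i)) e = ∑ i, chiFun rev (γ i) e := by
      intro e _; simp [Finset.sum_apply]
    rw [Finset.sum_congr rfl this, Finset.sum_comm]
    have hterm : ∀ i : Fin (n + 1),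
        ∑ e ∈ univ.filter (fun e => tail e = x), chiFun rev (γ i) e =
          (if tail (γ i) = x then (1:ℝ) else 0) - (if head (γ i) = x then 1 else 0) :=
      fun i => chi_filter_sum rev hrev hrevne tail head htail_rev (γ i) x
    rw [Finset.sum_congr rfl (fun i _ => hterm i), Finset.sum_sub_distrib]
    have hshift : ∑ i : Fin (n + 1), (if head (γ i) = x then (1:ℝ) else 0) =
        ∑ i : Fin (n + 1), (if tail (γ i) = x then (1:ℝ) else 0) := by
      have h1 : ∀ i : Fin (n + 1), (if head (γ i) = x then (1:ℝ) else 0) =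
          (if tail (γ (i + 1)) = x then (1:ℝ) else 0) := by
        intro i; rw [hγ i]
      rw [Finset.sum_congr rfl (fun i _ => h1 i)]
      exact sum_fin_shift (fun i => if tail (γ i) = x then (1:ℝ) else 0)
    rw [hshift]
    ring
  -- generator orthogonality: currents vs cycles
  have hgen3 : ∀ a ∈ {θ : E → ℝ | ∃ h : V → ℝ,
        (∀ x ∈ U, h x * ∑ e ∈ univ.filter (fun e => tail e = x), c e =
          ∑ e ∈ univ.filter (fun e => tail e = x), c e * h (head e)) ∧
        θ = fun e => c e * (h (head e) - h (tail e))},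
      ∀ b ∈ {θ : E → ℝ | ∃ (n : ℕ) (γ : Fin (n + 1) → E),
        (∀ i, head (γ i) = tail (γ (i + 1))) ∧ θ = ∑ i, chiFun rev (γ i)},
      rInner c a b = 0 := by
    rintro a ⟨h, _, rfl⟩ b ⟨n, γ, hγ, rfl⟩
    have ha : ∀ f, (fun e => c e * (h (head e) - h (tail e))) (rev f) =
        - (fun e => c e * (h (head e) - h (tail e))) f :=
      gradFun_antisym rev hrev tail head htail_rev c hcrev h
    rw [← rForm_apply, map_sum]
    have hterm : ∀ i : Fin (n + 1),
        rForm c (fun e => c e * (h (head e) - h (tail e))) (chiFun rev (γ i)) =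
          h (head (γ i)) - h (tail (γ i)) := by
      intro i
      rw [rForm_apply, rInner_chi_right rev hrevne c hcrev _ ha (γ i)]
      field_simp
      exact mul_div_cancel_left₀ _ (hc (γ i)).ne'
    rw [Finset.sum_congr rfl (fun i _ => hterm i)]
    have h1 : ∀ i : Fin (n + 1), h (head (γ i)) - h (tail (γ i)) =
        h (tail (γ (i + 1))) - h (tail (γ i)) := by
      intro i; rw [hγ i]
    rw [Finset.sum_congr rfl (fun i _ => h1 i), Finset.sum_sub_distrib]
    rw [sum_fin_shift (fun i => h (tail (γ i)))]
    ring
  have orth1 := span_ortho c _ _ hgen1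
  have orth2 := span_ortho c _ _ hgen2
  have orth3 := span_ortho c _ _ hgen3
  refine ⟨orth1, orth2, orth3, ?_⟩
  -- the span equality
  set S := starSpaceOn rev tail c U ⊔ currentSpace tail head c U ⊔
    cycleSpace rev tail head with hSdef
  have hS_le : S ≤ antisymSpace rev := by
    refine sup_le (sup_le ?_ ?_) ?_
    · apply Submodule.span_le.mpr
      rintro a ⟨x, _, rfl⟩
      exact starFun_antisym rev hrev hrevne tail c x
    · apply Submodule.span_le.mpr
      rintro a ⟨h, _, rfl⟩
      exact gradFun_antisym rev hrev tail head htail_rev c hcrev h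
    · apply Submodule.span_le.mpr
      rintro a ⟨n, γ, _, rfl⟩
      exact cycleGen_antisym rev hrev hrevne γ
  apply le_antisymm hS_le
  -- reverse inclusion via orthogonal complements
  have hrefl : (rForm c).IsRefl := by
    intro x y hxy
    rw [rForm_apply, rInner_comm]
    exact hxy
  have hnd : (LinearMap.BilinForm.restrict (rForm c) S).Nondegenerate := by
    constructor
    all_goals
      intro m hm
      have h0 : rInner c (m : E → ℝ) m = 0 := hm m
      exact Subtype.ext (eq_zero_of_rInner_self c hc _ h0)
  have hcompl := LinearMap.BilinForm.isCompl_orthogonal_of_restrict_nondegenerate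
    hrefl hnd
  intro θ hθ
  have hmem : θ ∈ S ⊔ LinearMap.BilinForm.orthogonal (rForm c) S := by
    rw [hcompl.sup_eq_top]; trivial
  obtain ⟨s, hs, t, ht, hst⟩ := Submodule.mem_sup.mp hmem
  -- t is antisymmetric
  have hta : ∀ f, t (rev f) = - t f := by
    have : t ∈ antisymSpace rev := by
      have : t = θ - s := eq_sub_of_add_eq' hst
      rw [this]
      exact Submodule.sub_mem _ hθ (hS_le hs)
    exact this
  have hVne : Nonempty V := by
    by_contra hV
    apply hU
    have : IsEmpty V := not_nonempty_iff.mp hV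
    apply Finset.eq_univ_of_forall
    intro x
    exact (this.false x).elim
  obtain ⟨x₀⟩ := hVne
  have hstarS : starSpaceOn rev tail c U ≤ S := le_trans le_sup_left le_sup_left
  have hcurS : currentSpace tail head c U ≤ S := le_trans le_sup_right le_sup_left
  have hcycS : cycleSpace rev tail head ≤ S := le_sup_right
  -- t orthogonal to stars on U
  have hstar : ∀ x ∈ U, rInner c (starFun rev tail c x) t = 0 := by
    intro x hx
    have hmem' : starFun rev tail c x ∈ S :=
      hstarS (Submodule.subset_span ⟨x, by exact_mod_cast hx, rfl⟩)
    exact ht _ hmem'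
  -- t orthogonal to cycles
  have hcyc : ∀ (n : ℕ) (γ : Fin (n + 1) → E),
      (∀ i, head (γ i) = tail (γ (i + 1))) →
      rInner c t (∑ i, chiFun rev (γ i)) = 0 := by
    intro n γ hγ
    have hmem' : (∑ i, chiFun rev (γ i)) ∈ S :=
      hcycS (Submodule.subset_span ⟨n, γ, hγ, rfl⟩)
    have hq : rInner c (∑ i, chiFun rev (γ i)) t = 0 := ht _ hmem'
    rw [rInner_comm] at hq
    exact hq
  have htc : t ∈ currentSpace tail head c U :=
    mem_current_of_ortho rev hrev hrevne tail head htail_rev c hc hcrev hconn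
      U x₀ t hta hstar hcyc
  have ht0 : t = 0 := by
    apply eq_zero_of_rInner_self c hc t
    exact ht t (hcurS htc)
  have hθs : θ = s := by rw [← hst, ht0, add_zero]
  rw [hθs]
  exact hs
end

section
/- On a finite connected network with a proper subset U ⊂ V, let f : V → ℝ and θ = c df. Then the orthogonal projection Π_U θ of θ onto the space I_U of current flows equals c dh, where h is the unique function equal to f on V∖U and discrete harmonic on U. Consequently the Dirichlet energy satisfies ℰ(h) ≤ ℰ(f). -/
open Finset

set_option linter.unusedSectionVars false
set_option maxHeartbeats 1000000

variable {V E : Type*} [Fintype V] [Fintype E] [DecidableEq V] [DecidableEq E]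

/-- The Dirichlet energy of a vertex function. -/
noncomputable def energyV (tail head : E → V) (c : E → ℝ) (f : V → ℝ) : ℝ :=
  (1 / 2) * ∑ e, c e * (f (head e) - f (tail e)) ^ 2

/-! ### Auxiliary lemmas -/

/-- Maximum principle: a function vanishing off `U` and harmonic on `U` is `≤ 0`. -/
lemma stmt4_maxle
    (tail head : E → V)
    (c : E → ℝ) (hc : ∀ e, 0 < c e)
    (hconn : ∀ x y : V,
      Relation.ReflTransGen (fun a b => ∃ e, tail e = a ∧ head e = b) x y)
    (U : Finset V) (hU : U ≠ univ) (g : V → ℝ)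
    (h0 : ∀ x ∉ U, g x = 0)
    (hh : ∀ x ∈ U, g x * ∑ e ∈ univ.filter (fun e => tail e = x), c e =
        ∑ e ∈ univ.filter (fun e => tail e = x), c e * g (head e)) :
    ∀ x, g x ≤ 0 := by
  have hne : Nonempty V := by
    by_contra hv
    rw [not_nonempty_iff] at hv
    exact hU (Subsingleton.elim _ _)
  obtain ⟨x0, -, hx0⟩ := Finset.exists_max_image (univ : Finset V) g univ_nonempty
  intro x
  by_contra hx
  push_neg at hx
  have hM : 0 < g x0 := lt_of_lt_of_le hx (hx0 x (mem_univ x))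
  obtain ⟨y, hy⟩ : ∃ y, y ∉ U := by
    by_contra hall
    push_neg at hall
    exact hU (Finset.eq_univ_iff_forall.mpr fun z => hall z)
  set M := g x0 with hMdef
  have key : ∀ z, Relation.ReflTransGen (fun a b => ∃ e, tail e = a ∧ head e = b) x0 z →
      g z = M := by
    intro z hz
    induction hz with
    | refl => rfl
    | tail hab hbc ih =>
      rename_i b cc
      obtain ⟨e, he1, he2⟩ := hbc
      have hbU : b ∈ U := by
        by_contra hbn
        have := h0 b hbn
        rw [this] at ih
        linarith [ih]
      have hsum := hh b hbU
      rw [ih] at hsum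
      have hzero : ∑ e' ∈ univ.filter (fun e' => tail e' = b),
          c e' * (M - g (head e')) = 0 := by
        have : ∑ e' ∈ univ.filter (fun e' => tail e' = b), c e' * (M - g (head e'))
            = M * ∑ e' ∈ univ.filter (fun e' => tail e' = b), c e'
              - ∑ e' ∈ univ.filter (fun e' => tail e' = b), c e' * g (head e') := by
          rw [Finset.mul_sum, ← Finset.sum_sub_distrib]
          exact Finset.sum_congr rfl fun e' _ => by ring
        rw [this, hsum]; ring
      have hnn : ∀ e' ∈ univ.filter (fun e' => tail e' = b),
          0 ≤ c e' * (M - g (head e')) := fun e' _ =>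
        mul_nonneg (hc e').le (by linarith [hx0 (head e') (mem_univ _)])
      have heach := (Finset.sum_eq_zero_iff_of_nonneg hnn).mp hzero
      have hme : e ∈ univ.filter (fun e' => tail e' = b) := by
        simp [he1]
      have := heach e hme
      have hce := (hc e).ne'
      have : M - g (head e) = 0 := by
        rcases mul_eq_zero.mp this with h | h
        · exact absurd h hce
        · exact h
      rw [he2] at this
      linarith
  have := key y (hconn x0 y)
  rw [h0 y hy] at this
  linarith

/-- A function vanishing off `U` and harmonic on `U` is identically zero. -/
lemma stmt4_harmzero
    (tail head : E → V)
    (c : E → ℝ) (hc : ∀ e, 0 < c e)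
    (hconn : ∀ x y : V,
      Relation.ReflTransGen (fun a b => ∃ e, tail e = a ∧ head e = b) x y)
    (U : Finset V) (hU : U ≠ univ) (g : V → ℝ)
    (h0 : ∀ x ∉ U, g x = 0)
    (hh : ∀ x ∈ U, g x * ∑ e ∈ univ.filter (fun e => tail e = x), c e =
        ∑ e ∈ univ.filter (fun e => tail e = x), c e * g (head e)) :
    g = 0 := by
  have h1 := stmt4_maxle tail head c hc hconn U hU g h0 hh
  have h2 := stmt4_maxle tail head c hc hconn U hU (-g)
    (fun x hx => by simp [h0 x hx])
    (fun x hx => by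
      simp only [Pi.neg_apply, neg_mul]
      rw [hh x hx, ← Finset.sum_neg_distrib]
      exact Finset.sum_congr rfl fun e _ => by ring)
  funext x
  have := h2 x
  simp only [Pi.neg_apply, neg_nonpos] at this
  exact le_antisymm (h1 x) this

noncomputable def stmt4_extz (U : Finset V) (g : {x // x ∈ U} → ℝ) : V → ℝ :=
  fun x => if hx : x ∈ U then g ⟨x, hx⟩ else 0

lemma stmt4_extz_add (U : Finset V) (g g' : {x // x ∈ U} → ℝ) :
    stmt4_extz U (g + g') = stmt4_extz U g + stmt4_extz U g' := by
  funext x; simp only [stmt4_extz, Pi.add_apply]; split_ifs <;> simp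

lemma stmt4_extz_smul (U : Finset V) (a : ℝ) (g : {x // x ∈ U} → ℝ) :
    stmt4_extz U (a • g) = a • stmt4_extz U g := by
  funext x; simp only [stmt4_extz, Pi.smul_apply, smul_eq_mul]; split_ifs <;> simp

noncomputable def stmt4_Tmap (tail head : E → V) (c : E → ℝ) (U : Finset V) :
    ({x // x ∈ U} → ℝ) →ₗ[ℝ] ({x // x ∈ U} → ℝ) where
  toFun g := fun x =>
    stmt4_extz U g x * ∑ e ∈ univ.filter (fun e => tail e = x), c e -
      ∑ e ∈ univ.filter (fun e => tail e = x), c e * stmt4_extz U g (head e)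
  map_add' g g' := by
    funext x
    simp only [stmt4_extz_add, Pi.add_apply]
    have : ∑ e ∈ univ.filter (fun e => tail e = (x:V)), c e *
        (stmt4_extz U g (head e) + stmt4_extz U g' (head e))
        = ∑ e ∈ univ.filter (fun e => tail e = (x:V)), c e * stmt4_extz U g (head e)
          + ∑ e ∈ univ.filter (fun e => tail e = (x:V)), c e * stmt4_extz U g' (head e) := by
      rw [← Finset.sum_add_distrib]
      exact Finset.sum_congr rfl fun e _ => by ring
    rw [this]
    ring
  map_smul' a g := by
    funext x
    simp only [stmt4_extz_smul, Pi.smul_apply, smul_eq_mul, RingHom.id_apply]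
    rw [Finset.mul_sum]
    have : ∑ e ∈ univ.filter (fun e => tail e = (x:V)), c e *
        (a * stmt4_extz U g (head e))
        = ∑ e ∈ univ.filter (fun e => tail e = (x:V)), a * (c e * stmt4_extz U g (head e)) :=
      Finset.sum_congr rfl fun e _ => by ring
    rw [this, ← Finset.mul_sum, ← Finset.mul_sum]
    ring

lemma stmt4_Tmap_surj (tail head : E → V)
    (c : E → ℝ) (hc : ∀ e, 0 < c e)
    (hconn : ∀ x y : V,
      Relation.ReflTransGen (fun a b => ∃ e, tail e = a ∧ head e = b) x y)
    (U : Finset V) (hU : U ≠ univ) :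
    Function.Surjective (stmt4_Tmap tail head c U) := by
  rw [← LinearMap.injective_iff_surjective]
  rw [injective_iff_map_eq_zero]
  intro g hg
  have hz : stmt4_extz U g = 0 := by
    apply stmt4_harmzero tail head c hc hconn U hU
    · intro x hx; simp [stmt4_extz, hx]
    · intro x hx
      have := congrFun hg ⟨x, hx⟩
      simp only [stmt4_Tmap, LinearMap.coe_mk, AddHom.coe_mk, Pi.zero_apply] at this
      linarith [this]
  funext i
  have := congrFun hz (i : V)
  simpa [stmt4_extz, i.2] using this

/-- Summation by parts: the gradient of a function vanishing off `U` is orthogonal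
to the gradient of a function harmonic on `U`. -/
lemma stmt4_sum_parts
    (rev : E → E) (hrev : ∀ e, rev (rev e) = e)
    (tail head : E → V) (htail_rev : ∀ e, tail (rev e) = head e)
    (c : E → ℝ) (hcrev : ∀ e, c (rev e) = c e)
    (U : Finset V) (g k : V → ℝ)
    (hg : ∀ x ∉ U, g x = 0)
    (hk : ∀ x ∈ U, k x * ∑ e ∈ univ.filter (fun e => tail e = x), c e =
        ∑ e ∈ univ.filter (fun e => tail e = x), c e * k (head e)) :
    ∑ e, c e * (g (head e) - g (tail e)) * (k (head e) - k (tail e)) = 0 := by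
  have hhead_rev : ∀ e, head (rev e) = tail e := fun e => by
    have := htail_rev (rev e); rw [hrev] at this; exact this.symm
  have split : ∀ e, c e * (g (head e) - g (tail e)) * (k (head e) - k (tail e))
      = c e * g (head e) * (k (head e) - k (tail e))
        - c e * g (tail e) * (k (head e) - k (tail e)) := fun e => by ring
  rw [Finset.sum_congr rfl (fun e _ => split e), Finset.sum_sub_distrib]
  have hA : ∑ e, c e * g (head e) * (k (head e) - k (tail e))
      = - ∑ e, c e * g (tail e) * (k (head e) - k (tail e)) := by
    rw [← Equiv.sum_comp (Function.Involutive.toPerm rev hrev)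
      (fun e => c e * g (head e) * (k (head e) - k (tail e)))]
    rw [← Finset.sum_neg_distrib]
    apply Finset.sum_congr rfl
    intro e _
    show c (rev e) * g (head (rev e)) * (k (head (rev e)) - k (tail (rev e)))
      = -(c e * g (tail e) * (k (head e) - k (tail e)))
    simp only [hcrev, hhead_rev, htail_rev]
    ring
  rw [hA]
  have hB : ∑ e, c e * g (tail e) * (k (head e) - k (tail e)) = 0 := by
    have := Finset.sum_fiberwise (univ : Finset E) tail
      (fun e => c e * g (tail e) * (k (head e) - k (tail e)))
    rw [← this]
    apply Finset.sum_eq_zero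
    intro x _
    have inner : ∑ e ∈ univ.filter (fun e => tail e = x),
        c e * g (tail e) * (k (head e) - k (tail e))
        = g x * (∑ e ∈ univ.filter (fun e => tail e = x), c e * k (head e)
            - k x * ∑ e ∈ univ.filter (fun e => tail e = x), c e) := by
      rw [mul_sub, Finset.mul_sum, Finset.mul_sum, Finset.mul_sum, ← Finset.sum_sub_distrib]
      apply Finset.sum_congr rfl
      intro e he
      have ht : tail e = x := by simpa using he
      rw [ht]; ring
    rw [inner]
    by_cases hx : x ∈ U
    · rw [hk x hx]; ring
    · rw [hg x hx]; ring
  rw [hB]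
  ring

lemma stmt4_rInner_add_right (c : E → ℝ) (θ φ ψ : E → ℝ) :
    rInner c θ (φ + ψ) = rInner c θ φ + rInner c θ ψ := by
  simp only [rInner, Pi.add_apply]
  rw [← mul_add, ← Finset.sum_add_distrib]
  congr 1
  exact Finset.sum_congr rfl fun e _ => by ring

lemma stmt4_rInner_smul_right (c : E → ℝ) (a : ℝ) (θ ψ : E → ℝ) :
    rInner c θ (a • ψ) = a * rInner c θ ψ := by
  simp only [rInner, Pi.smul_apply, smul_eq_mul]
  rw [Finset.mul_sum, Finset.mul_sum, Finset.mul_sum]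
  exact Finset.sum_congr rfl fun e _ => by ring

lemma stmt4_rInner_grads (tail head : E → V) (c : E → ℝ) (hc : ∀ e, 0 < c e)
    (u v : V → ℝ) :
    rInner c (fun e => c e * (u (head e) - u (tail e)))
        (fun e => c e * (v (head e) - v (tail e)))
      = (1/2) * ∑ e, c e * (u (head e) - u (tail e)) * (v (head e) - v (tail e)) := by
  simp only [rInner]
  congr 1
  apply Finset.sum_congr rfl
  intro e _
  have := (hc e).ne'
  field_simp

lemma stmt4_expand (c : E → ℝ) (θ φ : E → ℝ) :
    rInner c θ θ = rInner c (θ - φ) (θ - φ) + 2 * rInner c (θ - φ) φ + rInner c φ φ := by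
  simp only [rInner, Pi.sub_apply]
  have h1 : ∀ e : E, θ e * θ e * (c e)⁻¹
      = (θ e - φ e) * (θ e - φ e) * (c e)⁻¹
        + 2 * ((θ e - φ e) * φ e * (c e)⁻¹) + φ e * φ e * (c e)⁻¹ := fun e => by ring
  rw [Finset.sum_congr rfl (fun e _ => h1 e), Finset.sum_add_distrib,
    Finset.sum_add_distrib, ← Finset.mul_sum]
  ring

/-- The orthogonal projection of `c df` onto `I_U` is `c dh`,
where `h` is the unique function equal to `f` off `U` and discrete harmonic on
`U`; consequently `ℰ(h) ≤ ℰ(f)`. The projection property is expressed by `c dh`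
lying in `I_U` with `c df − c dh` orthogonal to `I_U`. -/
theorem stmt_4
    (rev : E → E) (hrev : ∀ e, rev (rev e) = e) (hrevne : ∀ e, rev e ≠ e)
    (tail head : E → V) (htail_rev : ∀ e, tail (rev e) = head e)
    (c : E → ℝ) (hc : ∀ e, 0 < c e) (hcrev : ∀ e, c (rev e) = c e)
    (hconn : ∀ x y : V,
      Relation.ReflTransGen (fun a b => ∃ e, tail e = a ∧ head e = b) x y)
    (U : Finset V) (hU : U ≠ univ) (f : V → ℝ) :
    ∃ h : V → ℝ,
      ((∀ x ∉ U, h x = f x) ∧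
        (∀ x ∈ U, h x * ∑ e ∈ univ.filter (fun e => tail e = x), c e =
          ∑ e ∈ univ.filter (fun e => tail e = x), c e * h (head e))) ∧
      (∀ h' : V → ℝ,
        ((∀ x ∉ U, h' x = f x) ∧
          (∀ x ∈ U, h' x * ∑ e ∈ univ.filter (fun e => tail e = x), c e =
            ∑ e ∈ univ.filter (fun e => tail e = x), c e * h' (head e))) →
        h' = h) ∧
      (fun e => c e * (h (head e) - h (tail e))) ∈ currentSpace tail head c U ∧
      (∀ ψ ∈ currentSpace tail head c U,
        rInner c (fun e => c e * (f (head e) - f (tail e))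
          - c e * (h (head e) - h (tail e))) ψ = 0) ∧
      energyV tail head c h ≤ energyV tail head c f := by
  classical
  -- Existence of the harmonic extension via surjectivity of the linear map.
  obtain ⟨g, hg⟩ := stmt4_Tmap_surj tail head c hc hconn U hU
    (fun x => ∑ e ∈ univ.filter (fun e => tail e = (x:V)), c e * f (head e)
      - f x * ∑ e ∈ univ.filter (fun e => tail e = (x:V)), c e)
  set h : V → ℝ := fun x => f x + stmt4_extz U g x with hhdef
  have hbd : ∀ x ∉ U, h x = f x := by
    intro x hx
    simp [hhdef, stmt4_extz, hx]
  have hharm : ∀ x ∈ U, h x * ∑ e ∈ univ.filter (fun e => tail e = x), c e =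
      ∑ e ∈ univ.filter (fun e => tail e = x), c e * h (head e) := by
    intro x hx
    have heq := congrFun hg ⟨x, hx⟩
    simp only [stmt4_Tmap, LinearMap.coe_mk, AddHom.coe_mk] at heq
    have hsplit : ∑ e ∈ univ.filter (fun e => tail e = x), c e * h (head e)
        = ∑ e ∈ univ.filter (fun e => tail e = x), c e * f (head e)
          + ∑ e ∈ univ.filter (fun e => tail e = x), c e * stmt4_extz U g (head e) := by
      rw [← Finset.sum_add_distrib]
      exact Finset.sum_congr rfl fun e _ => by simp only [hhdef]; ring
    have hx' : h x = f x + stmt4_extz U g x := rfl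
    rw [hsplit, hx', add_mul]
    linarith [heq]
  refine ⟨h, ⟨hbd, hharm⟩, ?_, ?_, ?_, ?_⟩
  · -- Uniqueness
    rintro h' ⟨hbd', hharm'⟩
    have hz : h' - h = 0 := by
      apply stmt4_harmzero tail head c hc hconn U hU
      · intro x hx
        simp [Pi.sub_apply, hbd' x hx, hbd x hx]
      · intro x hx
        simp only [Pi.sub_apply]
        rw [sub_mul, hharm' x hx, hharm x hx, ← Finset.sum_sub_distrib]
        exact Finset.sum_congr rfl fun e _ => by ring
    funext x
    have := congrFun hz x
    simp only [Pi.sub_apply, Pi.zero_apply] at this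
    linarith
  · -- Membership
    exact Submodule.subset_span ⟨h, hharm, rfl⟩
  · -- Orthogonality
    intro ψ hψ
    induction hψ using Submodule.span_induction with
    | mem ψ hmem =>
      obtain ⟨k, hk, rfl⟩ := hmem
      have hdiff : (fun e => c e * (f (head e) - f (tail e))
            - c e * (h (head e) - h (tail e)))
          = fun e => c e * ((f - h) (head e) - (f - h) (tail e)) := by
        funext e; simp only [Pi.sub_apply]; ring
      rw [hdiff, stmt4_rInner_grads tail head c hc (f - h) k]
      rw [stmt4_sum_parts rev hrev tail head htail_rev c hcrev U (f - h) k
        (fun x hx => by simp [Pi.sub_apply, hbd x hx]) hk]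
      ring
    | zero => simp [rInner]
    | add ψ₁ ψ₂ _ _ ih1 ih2 => rw [stmt4_rInner_add_right, ih1, ih2]; ring
    | smul a ψ' _ ih => rw [stmt4_rInner_smul_right, ih]; ring
  · -- Energy inequality
    have horth : rInner c (fun e => c e * (f (head e) - f (tail e))
          - c e * (h (head e) - h (tail e)))
        (fun e => c e * (h (head e) - h (tail e))) = 0 := by
      -- same computation as the orthogonality part, with ψ = c dh
      have hdiff : (fun e => c e * (f (head e) - f (tail e))
            - c e * (h (head e) - h (tail e)))
          = fun e => c e * ((f - h) (head e) - (f - h) (tail e)) := by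
        funext e; simp only [Pi.sub_apply]; ring
      rw [hdiff, stmt4_rInner_grads tail head c hc (f - h) h]
      rw [stmt4_sum_parts rev hrev tail head htail_rev c hcrev U (f - h) h
        (fun x hx => by simp [Pi.sub_apply, hbd x hx]) hharm]
      ring
    set θf : E → ℝ := fun e => c e * (f (head e) - f (tail e)) with hθf
    set θh : E → ℝ := fun e => c e * (h (head e) - h (tail e)) with hθh
    have hsub : (fun e => c e * (f (head e) - f (tail e))
        - c e * (h (head e) - h (tail e))) = θf - θh := rfl
    have hEf : rInner c θf θf = energyV tail head c f := by
      rw [hθf, stmt4_rInner_grads tail head c hc f f]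
      unfold energyV
      congr 1
      exact Finset.sum_congr rfl fun e _ => by ring
    have hEh : rInner c θh θh = energyV tail head c h := by
      rw [hθh, stmt4_rInner_grads tail head c hc h h]
      unfold energyV
      congr 1
      exact Finset.sum_congr rfl fun e _ => by ring
    have hnneg : 0 ≤ rInner c (θf - θh) (θf - θh) := by
      unfold rInner
      apply mul_nonneg (by norm_num)
      apply Finset.sum_nonneg
      intro e _
      exact mul_nonneg (mul_self_nonneg _) (inv_nonneg.mpr (hc e).le)
    have hexp := stmt4_expand c θf θh
    rw [hEf, hEh] at hexp
    rw [hsub] at horth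
    rw [horth] at hexp
    linarith
end

section
/- On a finite network with nonempty disjoint vertex subsets A, B, let θ be a flow between A and B (a flow on V∖(A∪B)) with strength(θ) = ∑_{e⁻∈A} θ(e), and let f : V → ℝ satisfy gap_{A,B}(f) := min_{b∈B} f(b) − max_{a∈A} f(a) ≥ 0. Then strength(θ)·gap_{A,B}(f) ≤ ℰ(θ)^{1/2}·ℰ(f)^{1/2}. -/
open Finset

/-- Strength–gap inequality (Dirichlet/Thomson):
`strength(θ) · gap_{A,B}(f) ≤ ℰ(θ)^{1/2} ℰ(f)^{1/2}`. -/
theorem stmt_7 {V E : Type*} [Fintype V] [Fintype E] [DecidableEq V]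
    (rev : E → E) (hrev : ∀ e, rev (rev e) = e) (hrevne : ∀ e, rev e ≠ e)
    (tail head : E → V) (htail_rev : ∀ e, tail (rev e) = head e)
    (c : E → ℝ) (hc : ∀ e, 0 < c e) (hcrev : ∀ e, c (rev e) = c e)
    (A B : Finset V) (hA : A.Nonempty) (hB : B.Nonempty) (hAB : Disjoint A B)
    (θ : E → ℝ) (hθanti : ∀ e, θ (rev e) = - θ e)
    (hflow : ∀ x, x ∉ A → x ∉ B →
      ∑ e ∈ univ.filter (fun e => tail e = x), θ e = 0)
    (f : V → ℝ)
    (hgap : 0 ≤ B.inf' hB f - A.sup' hA f) :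
    (∑ e ∈ univ.filter (fun e => tail e ∈ A), θ e) * (B.inf' hB f - A.sup' hA f)
      ≤ Real.sqrt ((1 / 2) * ∑ e, θ e ^ 2 * (c e)⁻¹) *
        Real.sqrt ((1 / 2) * ∑ e, c e * (f (head e) - f (tail e)) ^ 2) := by
  set a := A.sup' hA f with ha
  set b := B.inf' hB f with hb
  have hab : a ≤ b := by linarith
  set g : V → ℝ := fun x => min b (max (f x) a) with hgdef
  have hgA : ∀ x ∈ A, g x = a := by
    intro x hx
    have h1 : f x ≤ a := le_sup' f hx
    simp [hgdef, max_eq_right h1, min_eq_right hab]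
  have hgB : ∀ x ∈ B, g x = b := by
    intro x hx
    have h1 : b ≤ f x := inf'_le f hx
    have h2 : a ≤ f x := hab.trans h1
    simp [hgdef, max_eq_left h2, min_eq_left h1]
  -- 1-Lipschitz clipping
  have hlip : ∀ x y, (g x - g y) ^ 2 ≤ (f x - f y) ^ 2 := by
    intro x y
    have h1 : |g x - g y| ≤ |f x - f y| := by
      have h2 := abs_min_sub_min_le_max b (max (f x) a) b (max (f y) a)
      have h3 := abs_max_sub_max_le_abs (f x) (f y) a
      have h4 : max |b - b| |max (f x) a - max (f y) a| ≤ |f x - f y| := by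
        simp only [sub_self, abs_zero, max_le_iff]
        exact ⟨abs_nonneg _, h3⟩
      exact h2.trans h4
    calc (g x - g y) ^ 2 = |g x - g y| ^ 2 := (sq_abs _).symm
      _ ≤ |f x - f y| ^ 2 := by gcongr
      _ = (f x - f y) ^ 2 := sq_abs _
  set D : V → ℝ := fun x => ∑ e ∈ univ.filter (fun e => tail e = x), θ e with hD
  -- grouping by tails
  have hfib : ∀ h : V → ℝ, ∑ e, θ e * h (tail e) = ∑ x, D x * h x := by
    intro h
    rw [← Finset.sum_fiberwise univ tail (fun e => θ e * h (tail e))]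
    refine Finset.sum_congr rfl fun x _ => ?_
    rw [hD]
    simp only
    rw [Finset.sum_mul]
    refine Finset.sum_congr rfl fun e he => ?_
    rw [(Finset.mem_filter.1 he).2]
  -- reindexing by reversal
  have hrevsum : ∀ F : E → ℝ, ∑ e, F (rev e) = ∑ e, F e := fun F =>
    Fintype.sum_bijective rev (Function.Involutive.bijective hrev) _ _ (fun _ => rfl)
  have hsum0 : ∑ e, θ e = 0 := by
    have h := hrevsum θ
    simp only [hθanti, Finset.sum_neg_distrib] at h
    linarith
  have hheadrev : ∀ e, head (rev e) = tail e := by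
    intro e
    have := htail_rev (rev e)
    rw [hrev] at this
    exact this.symm
  have hhead : ∑ e, θ e * g (head e) = - ∑ e, θ e * g (tail e) := by
    have h := hrevsum (fun e => θ e * g (head e))
    simp only [hθanti, hheadrev, neg_mul] at h
    rw [← h, Finset.sum_neg_distrib]
  -- total divergence zero
  have hDtot : ∑ x, D x = 0 := by
    rw [hD]
    simp only
    rw [Finset.sum_fiberwise univ tail θ]
    exact hsum0
  have hDzero : ∀ x ∈ (univ : Finset V), x ∉ A ∪ B → D x * g x = 0 := by
    intro x _ hx
    have hxA : x ∉ A := fun h => hx (Finset.mem_union_left _ h)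
    have hxB : x ∉ B := fun h => hx (Finset.mem_union_right _ h)
    rw [hD]; simp only; rw [hflow x hxA hxB, zero_mul]
  have hDzero' : ∀ x ∈ (univ : Finset V), x ∉ A ∪ B → D x = 0 := by
    intro x _ hx
    have hxA : x ∉ A := fun h => hx (Finset.mem_union_left _ h)
    have hxB : x ∉ B := fun h => hx (Finset.mem_union_right _ h)
    exact hflow x hxA hxB
  set str := ∑ e ∈ univ.filter (fun e => tail e ∈ A), θ e with hstr
  have hstrA : ∑ x ∈ A, D x = str := by
    rw [hstr, hD]
    exact Finset.sum_fiberwise_eq_sum_filter univ A tail θ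
  have hstrB : ∑ x ∈ B, D x = - str := by
    have h1 : ∑ x ∈ A ∪ B, D x = 0 := by
      rw [← hDtot]
      exact Finset.sum_subset (Finset.subset_univ _) hDzero'
    rw [Finset.sum_union hAB] at h1
    rw [hstrA] at h1
    linarith
  -- key identity
  have hT : ∑ x, D x * g x = str * (a - b) := by
    have h1 : ∑ x, D x * g x = ∑ x ∈ A ∪ B, D x * g x :=
      (Finset.sum_subset (Finset.subset_univ _) hDzero).symm
    rw [h1, Finset.sum_union hAB]
    have h2 : ∑ x ∈ A, D x * g x = a * str := by
      rw [← hstrA, Finset.mul_sum]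
      exact Finset.sum_congr rfl fun x hx => by rw [hgA x hx]; ring
    have h3 : ∑ x ∈ B, D x * g x = b * (-str) := by
      rw [← hstrB, Finset.mul_sum]
      exact Finset.sum_congr rfl fun x hx => by rw [hgB x hx]; ring
    rw [h2, h3]; ring
  have hS : ∑ e, θ e * (g (head e) - g (tail e)) = 2 * str * (b - a) := by
    have h1 : ∑ e, θ e * (g (head e) - g (tail e))
        = ∑ e, θ e * g (head e) - ∑ e, θ e * g (tail e) := by
      rw [← Finset.sum_sub_distrib]
      exact Finset.sum_congr rfl fun e _ => by ring
    rw [h1, hhead, hfib g, hT]; ring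
  -- Cauchy–Schwarz
  set X := ∑ e, θ e ^ 2 * (c e)⁻¹ with hX
  set Y := ∑ e, c e * (g (head e) - g (tail e)) ^ 2 with hY
  set Z := ∑ e, c e * (f (head e) - f (tail e)) ^ 2 with hZ
  have hXnn : 0 ≤ X := Finset.sum_nonneg fun e _ =>
    mul_nonneg (sq_nonneg _) (inv_nonneg.2 (hc e).le)
  have hYnn : 0 ≤ Y := Finset.sum_nonneg fun e _ => mul_nonneg (hc e).le (sq_nonneg _)
  have hZnn : 0 ≤ Z := Finset.sum_nonneg fun e _ => mul_nonneg (hc e).le (sq_nonneg _)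
  have hYZ : Y ≤ Z := Finset.sum_le_sum fun e _ =>
    mul_le_mul_of_nonneg_left (hlip _ _) (hc e).le
  have hCS : (∑ e, θ e * (g (head e) - g (tail e))) ^ 2 ≤ X * Y := by
    have h := Finset.sum_mul_sq_le_sq_mul_sq univ
      (fun e => θ e * Real.sqrt (c e)⁻¹)
      (fun e => Real.sqrt (c e) * (g (head e) - g (tail e)))
    have h1 : ∀ e : E, θ e * Real.sqrt (c e)⁻¹ * (Real.sqrt (c e) * (g (head e) - g (tail e)))
        = θ e * (g (head e) - g (tail e)) := by
      intro e
      have : Real.sqrt (c e)⁻¹ * Real.sqrt (c e) = 1 := by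
        rw [Real.sqrt_inv]
        exact inv_mul_cancel₀ (ne_of_gt (Real.sqrt_pos.2 (hc e)))
      calc θ e * Real.sqrt (c e)⁻¹ * (Real.sqrt (c e) * (g (head e) - g (tail e)))
          = θ e * (g (head e) - g (tail e)) * (Real.sqrt (c e)⁻¹ * Real.sqrt (c e)) := by ring
        _ = θ e * (g (head e) - g (tail e)) := by rw [this, mul_one]
    have h2 : ∀ e : E, (θ e * Real.sqrt (c e)⁻¹) ^ 2 = θ e ^ 2 * (c e)⁻¹ := by
      intro e
      rw [mul_pow, Real.sq_sqrt (inv_nonneg.2 (hc e).le)]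
    have h3 : ∀ e : E, (Real.sqrt (c e) * (g (head e) - g (tail e))) ^ 2
        = c e * (g (head e) - g (tail e)) ^ 2 := by
      intro e
      rw [mul_pow, Real.sq_sqrt (hc e).le]
    simp only [h1, h2, h3] at h
    exact h
  have hSle : ∑ e, θ e * (g (head e) - g (tail e)) ≤ Real.sqrt X * Real.sqrt Y := by
    calc ∑ e, θ e * (g (head e) - g (tail e))
        ≤ |∑ e, θ e * (g (head e) - g (tail e))| := le_abs_self _
      _ = Real.sqrt ((∑ e, θ e * (g (head e) - g (tail e))) ^ 2) :=
          (Real.sqrt_sq_eq_abs _).symm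
      _ ≤ Real.sqrt (X * Y) := Real.sqrt_le_sqrt hCS
      _ = Real.sqrt X * Real.sqrt Y := Real.sqrt_mul hXnn _
  have hmain : str * (b - a) ≤ (1 / 2) * (Real.sqrt X * Real.sqrt Y) := by
    rw [hS] at hSle
    linarith
  have hfin : (1 / 2 : ℝ) * (Real.sqrt X * Real.sqrt Z)
      = Real.sqrt ((1 / 2) * X) * Real.sqrt ((1 / 2) * Z) := by
    rw [Real.sqrt_mul (by norm_num : (0:ℝ) ≤ 1/2), Real.sqrt_mul (by norm_num : (0:ℝ) ≤ 1/2)]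
    have : Real.sqrt (1/2) * Real.sqrt (1/2) = 1/2 :=
      Real.mul_self_sqrt (by norm_num)
    calc (1/2 : ℝ) * (Real.sqrt X * Real.sqrt Z)
        = (Real.sqrt (1/2) * Real.sqrt (1/2)) * (Real.sqrt X * Real.sqrt Z) := by rw [this]
      _ = Real.sqrt (1/2) * Real.sqrt X * (Real.sqrt (1/2) * Real.sqrt Z) := by ring
  calc str * (b - a) ≤ (1 / 2) * (Real.sqrt X * Real.sqrt Y) := hmain
    _ ≤ (1 / 2) * (Real.sqrt X * Real.sqrt Z) := by
        have : Real.sqrt Y ≤ Real.sqrt Z := Real.sqrt_le_sqrt hYZ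
        nlinarith [Real.sqrt_nonneg X, Real.sqrt_nonneg Y]
    _ = Real.sqrt ((1 / 2) * X) * Real.sqrt ((1 / 2) * Z) := hfin
end

section
/- Let Q = [v₁,w₁,v₂,w₂] be a quadrilateral with orthogonal diagonals whose counterclockwise boundary visits v₁,w₁,v₂,w₂ in order. Let 𝐯 and 𝐰 be the unit vectors in the directions of v₂ − v₁ and w₂ − w₁ respectively. Then 𝐰 is the counterclockwise rotation of 𝐯 by the angle π/2. -/
open Set

/-- Orientation lemma: for a quadrilateral `[v₁,w₁,v₂,w₂]`
with orthogonal diagonals whose counterclockwise boundary visits the vertices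
in this order (counterclockwise orientation is expressed by positivity of the
shoelace signed area), the unit vector `𝐰` along `w₂ − w₁` is the
counterclockwise rotation by `π/2` (i.e. `(a,b) ↦ (−b,a)`) of the unit vector
`𝐯` along `v₂ − v₁`. -/
theorem stmt_16
    (v₁ w₁ v₂ w₂ : EuclideanSpace ℝ (Fin 2))
    (hnev : v₁ ≠ v₂) (hnew : w₁ ≠ w₂)
    (horth : (inner ℝ (v₂ - v₁) (w₂ - w₁) : ℝ) = 0)
    (hccw : 0 <
      (v₁ 0 * w₁ 1 - v₁ 1 * w₁ 0) + (w₁ 0 * v₂ 1 - w₁ 1 * v₂ 0)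
        + (v₂ 0 * w₂ 1 - v₂ 1 * w₂ 0) + (w₂ 0 * v₁ 1 - w₂ 1 * v₁ 0)) :
    (‖w₂ - w₁‖⁻¹ • (w₂ - w₁)) 0 = - (‖v₂ - v₁‖⁻¹ • (v₂ - v₁)) 1 ∧
    (‖w₂ - w₁‖⁻¹ • (w₂ - w₁)) 1 = (‖v₂ - v₁‖⁻¹ • (v₂ - v₁)) 0 := by
  set a0 : ℝ := v₂ 0 - v₁ 0 with ha0
  set a1 : ℝ := v₂ 1 - v₁ 1 with ha1
  set b0 : ℝ := w₂ 0 - w₁ 0 with hb0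
  set b1 : ℝ := w₂ 1 - w₁ 1 with hb1
  have hdot : a0 * b0 + a1 * b1 = 0 := by
    rw [PiLp.inner_apply] at horth
    simpa [Fin.sum_univ_two, ha0, ha1, hb0, hb1, mul_comm] using horth
  have hcross : 0 < a0 * b1 - a1 * b0 := by
    have : a0 * b1 - a1 * b0 =
      (v₁ 0 * w₁ 1 - v₁ 1 * w₁ 0) + (w₁ 0 * v₂ 1 - w₁ 1 * v₂ 0)
        + (v₂ 0 * w₂ 1 - v₂ 1 * w₂ 0) + (w₂ 0 * v₁ 1 - w₂ 1 * v₁ 0) := by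
      simp only [ha0, ha1, hb0, hb1]; ring
    linarith [hccw, this.ge, this.le]
  have hna : ‖v₂ - v₁‖ ^ 2 = a0 ^ 2 + a1 ^ 2 := by
    rw [EuclideanSpace.norm_eq, Real.sq_sqrt (by positivity)]
    simp [Fin.sum_univ_two, ha0, ha1, sq]
  have hnb : ‖w₂ - w₁‖ ^ 2 = b0 ^ 2 + b1 ^ 2 := by
    rw [EuclideanSpace.norm_eq, Real.sq_sqrt (by positivity)]
    simp [Fin.sum_univ_two, hb0, hb1, sq]
  have hnap : 0 < ‖v₂ - v₁‖ := by
    rw [norm_pos_iff, sub_ne_zero]; exact fun h => hnev h.symm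
  have hnbp : 0 < ‖w₂ - w₁‖ := by
    rw [norm_pos_iff, sub_ne_zero]; exact fun h => hnew h.symm
  set na := ‖v₂ - v₁‖
  set nb := ‖w₂ - w₁‖
  have hceq : a0 * b1 - a1 * b0 = na * nb := by
    have h2 : (a0 * b1 - a1 * b0) ^ 2 = (na * nb) ^ 2 := by
      rw [mul_pow, hna, hnb]; nlinarith [hdot]
    have hfac : (a0 * b1 - a1 * b0 - na * nb) * (a0 * b1 - a1 * b0 + na * nb) = 0 := by
      linear_combination h2
    rcases mul_eq_zero.1 hfac with h | h
    · linarith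
    · nlinarith [mul_pos hnap hnbp]
  have key0 : b0 * na = -a1 * nb := by
    have h : b0 * na ^ 2 = -a1 * (na * nb) := by
      rw [hna, ← hceq]; linear_combination a0 * hdot
    exact mul_right_cancel₀ hnap.ne' (by linear_combination h)
  have key1 : b1 * na = a0 * nb := by
    have h : b1 * na ^ 2 = a0 * (na * nb) := by
      rw [hna, ← hceq]; linear_combination a1 * hdot
    exact mul_right_cancel₀ hnap.ne' (by linear_combination h)
  constructor
  · show nb⁻¹ * (w₂ - w₁) 0 = -(na⁻¹ * (v₂ - v₁) 1)
    have e1 : (w₂ - w₁) 0 = b0 := by simp [hb0]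
    have e2 : (v₂ - v₁) 1 = a1 := by simp [ha1]
    rw [e1, e2, inv_mul_eq_div, ← mul_neg, inv_mul_eq_div, div_eq_div_iff hnbp.ne' hnap.ne']
    linarith [key0]
  · show nb⁻¹ * (w₂ - w₁) 1 = na⁻¹ * (v₂ - v₁) 0
    have e1 : (w₂ - w₁) 1 = b1 := by simp [hb1]
    have e2 : (v₂ - v₁) 0 = a0 := by simp [ha0]
    rw [e1, e2, inv_mul_eq_div, inv_mul_eq_div, div_eq_div_iff hnbp.ne' hnap.ne']
    linarith [key1]
end

section
/- Let G be a finite plane graph whose inner faces are all bounded by simple closed curves, and let H be a block (maximal 2-connected subgraph) of G. Then every inner face of H is an inner face of G. -/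
open Set

/-- A finite plane graph: finitely many vertices (points of the plane) together
with finitely many edges, each edge a continuous arc joining two vertices,
properly embedded (arcs are injective away from the endpoints, meet vertices
only at their endpoints, and distinct arcs meet only at common endpoints). -/
structure FinPlaneGraph where
  V : Finset (EuclideanSpace ℝ (Fin 2))
  n : ℕ
  edge : Fin n → ℝ → EuclideanSpace ℝ (Fin 2)
  cont : ∀ i, ContinuousOn (edge i) (Icc 0 1)
  inj : ∀ i, InjOn (edge i) (Ico 0 1)
  inj' : ∀ i, ∀ s ∈ Ioo (0 : ℝ) 1, edge i s ≠ edge i 1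
  ends : ∀ i, edge i 0 ∈ V ∧ edge i 1 ∈ V
  int_not_vertex : ∀ i, ∀ t ∈ Ioo (0 : ℝ) 1, edge i t ∉ V
  edges_meet_at_ends : ∀ i j, i ≠ j → ∀ s ∈ Ioo (0 : ℝ) 1,
    edge i s ∉ edge j '' Icc 0 1

/-- The union of the vertices and edges of a plane graph, as a subset of the
plane. -/
def FinPlaneGraph.carrier (G : FinPlaneGraph) : Set (EuclideanSpace ℝ (Fin 2)) :=
  ↑G.V ∪ ⋃ i, G.edge i '' Icc 0 1

/-- A subgraph of a plane graph, given by a subset of the vertices and a subset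
of the edges containing the endpoints of all its edges. -/
structure FinPlaneGraph.Sub (G : FinPlaneGraph) where
  W : Finset (EuclideanSpace ℝ (Fin 2))
  S : Finset (Fin G.n)
  hW : W ⊆ G.V
  hends : ∀ i ∈ S, G.edge i 0 ∈ W ∧ G.edge i 1 ∈ W

/-- The point set of a subgraph. -/
def FinPlaneGraph.Sub.carrier {G : FinPlaneGraph} (H : G.Sub) :
    Set (EuclideanSpace ℝ (Fin 2)) :=
  ↑H.W ∪ ⋃ i ∈ H.S, G.edge i '' Icc 0 1

/-- A subgraph is 2-connected if its point set is connected and remains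
connected after removing any single vertex. -/
def FinPlaneGraph.Sub.TwoConnected {G : FinPlaneGraph} (H : G.Sub) : Prop :=
  IsConnected H.carrier ∧ ∀ v ∈ H.W, IsConnected (H.carrier \ {v})

/-- A block of a plane graph: a maximal 2-connected subgraph. -/
def FinPlaneGraph.Sub.IsBlock {G : FinPlaneGraph} (H : G.Sub) : Prop :=
  H.TwoConnected ∧
    ∀ H' : G.Sub, H'.TwoConnected → H.W ⊆ H'.W → H.S ⊆ H'.S →
      H'.W = H.W ∧ H'.S = H.S

/-- `f` is an inner face of the set `X` (union of vertices and edges of a plane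
graph): a bounded connected component of the complement of `X`. -/
def IsInnerFace (X f : Set (EuclideanSpace ℝ (Fin 2))) : Prop :=
  (∃ x ∉ X, f = connectedComponentIn Xᶜ x) ∧ Bornology.IsBounded f


open Set

namespace S19

abbrev Pt := EuclideanSpace ℝ (Fin 2)

/-- If a preconnected set misses the frontier of an open set but meets it, it is contained
in it. -/
theorem absorb {α : Type*} [TopologicalSpace α] {s t : Set α} (hs : IsPreconnected s)
    (ht : IsOpen t) (hfr : s ∩ frontier t = ∅) (hne : (s ∩ t).Nonempty) : s ⊆ t := by
  refine IsPreconnected.subset_left_of_subset_union ht isClosed_closure.isOpen_compl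
    (disjoint_compl_right.mono_left subset_closure) ?_ hne hs
  intro x hx
  by_cases hxc : x ∈ closure t
  · left
    by_contra hxt
    exact (eq_empty_iff_forall_notMem.1 hfr x) ⟨hx, hxc, by simpa [ht.interior_eq] using hxt⟩
  · exact Or.inr hxc

theorem frontier_ccIn {α : Type*} [TopologicalSpace α] [LocallyConnectedSpace α]
    {U : Set α} (hU : IsOpen U) (x : α) : frontier (connectedComponentIn U x) ⊆ Uᶜ := by
  intro y hy
  by_contra hyU
  simp only [mem_compl_iff, not_not] at hyU
  have hopen : IsOpen (connectedComponentIn U x) := hU.connectedComponentIn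
  have hfr : y ∈ closure (connectedComponentIn U x) \ connectedComponentIn U x := by
    rwa [← hopen.frontier_eq]
  have hccy : IsOpen (connectedComponentIn U y) := hU.connectedComponentIn
  have hyy : y ∈ connectedComponentIn U y := mem_connectedComponentIn hyU
  obtain ⟨z, hz1, hz2⟩ : (connectedComponentIn U y ∩ connectedComponentIn U x).Nonempty := by
    have := hfr.1
    rw [mem_closure_iff] at this
    exact this _ hccy hyy
  have h1 : connectedComponentIn U y = connectedComponentIn U z := connectedComponentIn_eq hz1
  have h2 : connectedComponentIn U x = connectedComponentIn U z := connectedComponentIn_eq hz2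
  exact hfr.2 (h2 ▸ h1 ▸ hyy)

/-- Attaching a finite family of preconnected sets each meeting a connected set keeps
connectivity. -/
theorem union_family {α : Type*} [TopologicalSpace α] {ι : Type*} {s : Set α}
    (hs : IsConnected s) (F : Finset ι) (t : ι → Set α)
    (h : ∀ j ∈ F, IsPreconnected (t j) ∧ (t j ∩ s).Nonempty) :
    IsConnected (s ∪ ⋃ j ∈ F, t j) := by
  classical
  induction F using Finset.induction_on with
  | empty => simpa using hs
  | @insert a F ha IH =>
      have hrest := IH (fun j hj => h j (Finset.mem_insert_of_mem hj))
      have hta := h a (Finset.mem_insert_self a F)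
      have hconn : IsConnected (t a) := ⟨hta.2.mono (inter_subset_left), hta.1⟩
      have : IsConnected ((s ∪ ⋃ j ∈ F, t j) ∪ t a) := by
        refine IsConnected.union ?_ hrest hconn
        obtain ⟨w, hw⟩ := hta.2
        exact ⟨w, Or.inl hw.2, hw.1⟩
      have heq : (s ∪ ⋃ j ∈ (insert a F : Finset ι), t j) = (s ∪ ⋃ j ∈ F, t j) ∪ t a := by
        simp only [Finset.set_biUnion_insert]
        ext z; constructor
        · rintro (hz | hz | hz)
          · exact Or.inl (Or.inl hz)
          · exact Or.inr hz
          · exact Or.inl (Or.inr hz)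
        · rintro ((hz | hz) | hz)
          · exact Or.inl hz
          · exact Or.inr (Or.inr hz)
          · exact Or.inr (Or.inl hz)
      rwa [heq]

end S19

open Set
namespace S19

theorem ray_exit {f : Set Pt} (hf : IsOpen f) {x : Pt} (hx : x ∈ f)
    (hb : Bornology.IsBounded f) (v : Pt) (hv : v ≠ 0) :
    ∃ t : ℝ, 0 < t ∧ x + t • v ∈ frontier f := by
  set g : ℝ → Pt := fun t => x + t • v with hg
  have hgc : Continuous g := by continuity
  set S : Set ℝ := {t : ℝ | 0 ≤ t ∧ g t ∉ f} with hS
  have hSclosed : IsClosed S := by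
    have : S = Ici (0:ℝ) ∩ g ⁻¹' fᶜ := by ext t; simp [hS, mem_Ici]
    rw [this]
    exact isClosed_Ici.inter (hf.isClosed_compl.preimage hgc)
  have hvpos : 0 < ‖v‖ := norm_pos_iff.2 hv
  obtain ⟨R, hR⟩ : ∃ R, f ⊆ Metric.closedBall 0 R := hb.subset_closedBall 0
  have hR0 : (0:ℝ) ≤ R := le_trans (norm_nonneg x) (by simpa using Metric.mem_closedBall.1 (hR hx))
  have hSne : S.Nonempty := by
    refine ⟨(R + ‖x‖ + 1) / ‖v‖, ⟨by positivity, ?_⟩⟩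
    intro hmem
    have h1 : ‖g ((R + ‖x‖ + 1) / ‖v‖)‖ ≤ R := by
      simpa using Metric.mem_closedBall.1 (hR hmem)
    have h2 : ‖((R + ‖x‖ + 1) / ‖v‖) • v‖ ≤ ‖g ((R + ‖x‖ + 1) / ‖v‖)‖ + ‖x‖ := by
      have h := norm_sub_le (g ((R + ‖x‖ + 1) / ‖v‖)) x
      have heq : g ((R + ‖x‖ + 1) / ‖v‖) - x = ((R + ‖x‖ + 1) / ‖v‖) • v := by
        simp [hg]
      rwa [heq] at h
    rw [norm_smul, Real.norm_eq_abs, abs_of_pos (by positivity),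
      div_mul_cancel₀ _ (ne_of_gt hvpos)] at h2
    linarith
  have hSbdd : BddBelow S := ⟨0, fun t ht => ht.1⟩
  set s := sInf S with hsdef
  have hsS : s ∈ S := hSclosed.csInf_mem hSne hSbdd
  obtain ⟨ε, hε, hball⟩ := Metric.isOpen_iff.1 hf x hx
  have hslb : ε / ‖v‖ ≤ s := by
    refine le_csInf hSne ?_
    intro t ht
    by_contra hlt
    push_neg at hlt
    have ht0 : 0 ≤ t := ht.1
    have : g t ∈ Metric.ball x ε := by
      rw [Metric.mem_ball, dist_eq_norm]
      have heq : ‖g t - x‖ = t * ‖v‖ := by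
        simp [hg, norm_smul, Real.norm_eq_abs, abs_of_nonneg ht0]
      rw [heq]
      calc t * ‖v‖ < (ε / ‖v‖) * ‖v‖ := mul_lt_mul_of_pos_right hlt hvpos
        _ = ε := div_mul_cancel₀ _ (ne_of_gt hvpos)
    exact ht.2 (hball this)
  have hspos : 0 < s := lt_of_lt_of_le (by positivity) hslb
  refine ⟨s, hspos, ?_⟩
  rw [hf.frontier_eq]
  constructor
  · have himg : g '' Ico 0 s ⊆ f := by
      rintro _ ⟨t, ⟨ht0, hts⟩, rfl⟩
      by_contra hgt
      exact absurd (csInf_le hSbdd ⟨ht0, hgt⟩) (not_le.2 hts)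
    have hmem : g s ∈ closure (g '' Ico 0 s) := by
      refine ContinuousWithinAt.mem_closure_image (hgc.continuousWithinAt) ?_
      rw [closure_Ico (ne_of_lt hspos)]
      exact ⟨le_of_lt hspos, le_refl s⟩
    exact closure_mono himg hmem
  · exact hsS.2

theorem frontier_pair {f : Set Pt} (hf : IsOpen f) (hfne : f.Nonempty)
    (hb : Bornology.IsBounded f) {A : Set Pt} (hA : A.Subsingleton) :
    ∃ z ∈ frontier f, z ∉ A := by
  obtain ⟨x, hx⟩ := hfne
  set e : Pt := EuclideanSpace.single (0 : Fin 2) (1:ℝ) with he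
  have hv : e ≠ 0 := by
    intro h
    have := congrFun (congrArg (fun (w : Pt) => (w : Fin 2 → ℝ)) h) 0
    simp [he] at this
  obtain ⟨t₁, ht₁, hz₁⟩ := ray_exit hf hx hb e hv
  obtain ⟨t₂, ht₂, hz₂⟩ := ray_exit hf hx hb (-e) (neg_ne_zero.2 hv)
  have hne : x + t₁ • e ≠ x + t₂ • -e := by
    intro h
    have hsub : (x + t₁ • e) - (x + t₂ • -e) = (t₁ + t₂) • e := by module
    rw [h, sub_self] at hsub
    rcases smul_eq_zero.1 hsub.symm with h' | h'
    · linarith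
    · exact hv h'
  by_cases h1 : (x + t₁ • e) ∈ A
  · exact ⟨_, hz₂, fun h2 => hne (hA h1 h2)⟩
  · exact ⟨_, hz₁, h1⟩

end S19

open Set Metric
namespace S19

theorem homeo_preconn {X Y : Type*} [TopologicalSpace X] [TopologicalSpace Y]
    (e : X ≃ₜ Y) [PreconnectedSpace Y] : PreconnectedSpace X := by
  constructor
  rw [← e.symm.surjective.range_eq]
  exact isPreconnected_range e.symm.continuous

theorem rank_fact : (1 : Cardinal) < Module.rank ℝ Pt := by
  have hf : Module.finrank ℝ Pt = 2 := finrank_euclideanSpace_fin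
  have : (Module.finrank ℝ Pt : Cardinal) = Module.rank ℝ Pt := Module.finrank_eq_rank ℝ Pt
  rw [← this, hf]
  exact_mod_cast one_lt_two

theorem sphere_compl_preconn (w : ↥(sphere (0:Pt) 1)) :
    IsPreconnected ({w}ᶜ : Set ↥(sphere (0:Pt) 1)) := by
  have hv' : ‖(w : Pt)‖ = 1 := by
    have := w.2
    rwa [mem_sphere_zero_iff_norm] at this
  set P := stereographic hv' with hP
  have hsrc : P.source = ({w}ᶜ : Set ↥(sphere (0:Pt) 1)) := by
    rw [hP, stereographic_source]
  haveI h1 : PreconnectedSpace ↥(Submodule.span ℝ {(w : Pt)})ᗮ :=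
    Subtype.preconnectedSpace ((Submodule.span ℝ {(w : Pt)})ᗮ.convex).isPreconnected
  haveI h2 : PreconnectedSpace ↥P.target := by
    refine Subtype.preconnectedSpace ?_
    rw [hP, stereographic_target]
    exact isPreconnected_univ
  haveI h3 : PreconnectedSpace ↥P.source := homeo_preconn P.toHomeomorphSourceTarget
  have : IsPreconnected P.source := by
    rw [← Subtype.range_coe (s := P.source)]
    exact isPreconnected_range continuous_subtype_val
  rwa [hsrc] at this

/-- A set homeomorphic to the circle stays preconnected after removing at most one point. -/
theorem circle_diff_preconn {s : Set Pt} (e : ↥s ≃ₜ ↥(sphere (0:Pt) 1)) {A : Set Pt}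
    (hA : A.Subsingleton) : IsPreconnected (s \ A) := by
  haveI : PreconnectedSpace ↥(sphere (0:Pt) 1) :=
    Subtype.preconnectedSpace (isConnected_sphere rank_fact 0 zero_le_one).isPreconnected
  rcases (A ∩ s).eq_empty_or_nonempty with hAs | ⟨a, haA, has⟩
  · have hseq : s \ A = s := by
      ext x
      refine ⟨fun h => h.1, fun h => ⟨h, fun hxA => ?_⟩⟩
      exact absurd (mem_inter hxA h) (by rw [hAs]; exact notMem_empty x)
    rw [hseq, ← Subtype.range_coe (s := s)]
    haveI : PreconnectedSpace ↥s := homeo_preconn e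
    exact isPreconnected_range continuous_subtype_val
  · have hseq : s \ A = s \ {a} := by
      ext x
      constructor
      · rintro ⟨hx, hnx⟩
        exact ⟨hx, fun hxa => hnx (by rwa [mem_singleton_iff.1 hxa])⟩
      · rintro ⟨hx, hnx⟩
        exact ⟨hx, fun hxA => hnx (mem_singleton_iff.2 (hA hxA haA))⟩
    rw [hseq]
    set w := e ⟨a, has⟩ with hw
    have step1 : IsPreconnected ({w}ᶜ : Set ↥(sphere (0:Pt) 1)) := sphere_compl_preconn w
    have step2 : IsPreconnected ({(⟨a, has⟩ : ↥s)}ᶜ : Set ↥s) := by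
      have himg : (e.symm '' ({w}ᶜ : Set ↥(sphere (0:Pt) 1))) = {(⟨a, has⟩ : ↥s)}ᶜ := by
        ext x
        simp only [mem_image, mem_compl_iff, mem_singleton_iff]
        constructor
        · rintro ⟨y, hy, rfl⟩ h
          exact hy (by rw [hw, ← h, e.apply_symm_apply])
        · intro hx
          exact ⟨e x, fun h => hx (by rw [← e.symm_apply_apply x, h, hw, e.symm_apply_apply]),
            e.symm_apply_apply x⟩
      rw [← himg]
      exact step1.image _ e.symm.continuous.continuousOn
    have step3 : s \ {a} = Subtype.val '' ({(⟨a, has⟩ : ↥s)}ᶜ : Set ↥s) := by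
      ext x
      constructor
      · rintro ⟨hx, hnx⟩
        exact ⟨⟨x, hx⟩, fun h => hnx (by rw [mem_singleton_iff] at h ⊢; exact congrArg Subtype.val h), rfl⟩
      · rintro ⟨⟨y, hy⟩, hne, rfl⟩
        exact ⟨hy, fun h => hne (by rw [mem_singleton_iff] at h ⊢; exact Subtype.ext h)⟩
    rw [step3]
    exact step2.image _ continuous_subtype_val.continuousOn

end S19

open Set

namespace S19

variable (G : FinPlaneGraph)

/-- The image of a subinterval of an edge. -/
theorem subarc_preconn (i : Fin G.n) {s : Set ℝ} (hs : IsPreconnected s) (hsub : s ⊆ Icc 0 1) :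
    IsPreconnected (G.edge i '' s) :=
  hs.image _ ((G.cont i).mono hsub)

theorem arc_compact (i : Fin G.n) : IsCompact (G.edge i '' Icc 0 1) :=
  isCompact_Icc.image_of_continuousOn (G.cont i)

theorem e0_mem_arc (i : Fin G.n) : G.edge i 0 ∈ G.edge i '' Icc 0 1 :=
  ⟨0, ⟨le_refl _, zero_le_one⟩, rfl⟩

theorem e1_mem_arc (i : Fin G.n) : G.edge i 1 ∈ G.edge i '' Icc 0 1 :=
  ⟨1, ⟨zero_le_one, le_refl _⟩, rfl⟩

theorem arc_conn (i : Fin G.n) : IsConnected (G.edge i '' Icc 0 1) :=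
  ⟨⟨_, e0_mem_arc G i⟩, subarc_preconn G i isPreconnected_Icc (subset_refl _)⟩

theorem Gcar_closed : IsClosed G.carrier := by
  refine IsClosed.union (G.V.finite_toSet.isClosed) ?_
  exact isClosed_iUnion_of_finite (fun i => (arc_compact G i).isClosed)

variable (H : G.Sub)

theorem Hcar_closed : IsClosed H.carrier := by
  refine IsClosed.union (H.W.finite_toSet.isClosed) ?_
  exact Set.Finite.isClosed_biUnion (Set.toFinite _) (fun i _ => (arc_compact G i).isClosed)

theorem Hcar_sub : H.carrier ⊆ G.carrier := by
  rintro x (hx | hx)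
  · exact Or.inl (H.hW hx)
  · simp only [mem_iUnion, exists_prop] at hx
    obtain ⟨i, hiS, hxa⟩ := hx
    exact Or.inr (mem_iUnion.2 ⟨i, hxa⟩)

theorem W_sub_Hcar : (↑H.W : Set Pt) ⊆ H.carrier := fun _ h => Or.inl h

theorem arc_sub_Hcar {i : Fin G.n} (hi : i ∈ H.S) : G.edge i '' Icc 0 1 ⊆ H.carrier :=
  fun x hx => Or.inr (mem_iUnion₂.2 ⟨i, hi, hx⟩)

/-- A vertex lying on an arc is one of its endpoints. -/
theorem vertex_mem_arc {x : Pt} (hx : x ∈ G.V) {i : Fin G.n} (hxa : x ∈ G.edge i '' Icc 0 1) :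
    x = G.edge i 0 ∨ x = G.edge i 1 := by
  obtain ⟨t, ht, rfl⟩ := hxa
  rcases eq_or_lt_of_le ht.1 with h0 | h0
  · exact Or.inl (by rw [← h0])
  rcases eq_or_lt_of_le ht.2 with h1 | h1
  · exact Or.inr (by rw [h1])
  · exact absurd hx (G.int_not_vertex i t ⟨h0, h1⟩)

/-- A vertex of `G` lying in the carrier of `H` is a vertex of `H`. -/
theorem vertexH {x : Pt} (hx : x ∈ G.V) (hxc : x ∈ H.carrier) : x ∈ H.W := by
  rcases hxc with h | h
  · exact h
  · simp only [mem_iUnion, exists_prop] at h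
    obtain ⟨i, hi, hxa⟩ := h
    rcases vertex_mem_arc G hx hxa with h | h
    · rw [h]; exact (H.hends i hi).1
    · rw [h]; exact (H.hends i hi).2

/-- Interior points of an arc not in `H` avoid the carrier of `H`. -/
theorem int_arc_avoid {i : Fin G.n} (hi : i ∉ H.S) {t : ℝ} (ht : t ∈ Ioo (0:ℝ) 1) :
    G.edge i t ∉ H.carrier := by
  rintro (h | h)
  · exact G.int_not_vertex i t ht (H.hW h)
  · simp only [mem_iUnion, exists_prop] at h
    obtain ⟨j, hj, hxa⟩ := h
    have hij : i ≠ j := fun h => hi (h ▸ hj)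
    exact G.edges_meet_at_ends i j hij t ht hxa

/-- Every point of an arc is in the closure of its interior. -/
theorem arc_closure_int (i : Fin G.n) :
    G.edge i '' Icc 0 1 ⊆ closure (G.edge i '' Ioo 0 1) := by
  rintro _ ⟨t, ht, rfl⟩
  have hcwa : ContinuousWithinAt (G.edge i) (Ioo 0 1) t :=
    ((G.cont i) t ht).mono Ioo_subset_Icc_self
  refine hcwa.mem_closure_image ?_
  rw [closure_Ioo one_ne_zero.symm]
  exact ht

/-- Removing an endpoint from an arc with distinct endpoints. -/
theorem arc_diff_e0 {i : Fin G.n} (hne : G.edge i 0 ≠ G.edge i 1) :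
    G.edge i '' Icc 0 1 \ {G.edge i 0} = G.edge i '' Ioc 0 1 := by
  ext x
  constructor
  · rintro ⟨⟨t, ht, rfl⟩, hx0⟩
    rcases eq_or_lt_of_le ht.1 with h0 | h0
    · rw [← h0] at hx0
      exact absurd (mem_singleton _) hx0
    · exact ⟨t, ⟨h0, ht.2⟩, rfl⟩
  · rintro ⟨t, ht, rfl⟩
    refine ⟨⟨t, ⟨le_of_lt ht.1, ht.2⟩, rfl⟩, ?_⟩
    simp only [mem_singleton_iff]
    rcases eq_or_lt_of_le ht.2 with h1 | h1
    · rw [h1]; exact hne.symm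
    · intro h
      have := G.inj i ⟨le_of_lt ht.1, h1⟩ ⟨le_refl (0:ℝ), zero_lt_one⟩ h
      exact (ne_of_gt ht.1) this

theorem arc_diff_e1 {i : Fin G.n} (hne : G.edge i 0 ≠ G.edge i 1) :
    G.edge i '' Icc 0 1 \ {G.edge i 1} = G.edge i '' Ico 0 1 := by
  ext x
  constructor
  · rintro ⟨⟨t, ht, rfl⟩, hx1⟩
    rcases eq_or_lt_of_le ht.2 with h1 | h1
    · rw [h1] at hx1
      exact absurd (mem_singleton _) hx1
    · exact ⟨t, ⟨ht.1, h1⟩, rfl⟩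
  · rintro ⟨t, ht, rfl⟩
    refine ⟨⟨t, ⟨ht.1, le_of_lt ht.2⟩, rfl⟩, ?_⟩
    simp only [mem_singleton_iff]
    rcases eq_or_lt_of_le ht.1 with h0 | h0
    · rw [← h0]; exact hne
    · exact G.inj' i t ⟨h0, ht.2⟩

/-- Removing a vertex point from an arc with distinct endpoints: the rest is preconnected and
still contains an endpoint. -/
theorem arc_diff_vertex {i : Fin G.n} (hne : G.edge i 0 ≠ G.edge i 1) {v : Pt} (hv : v ∈ G.V) :
    IsPreconnected (G.edge i '' Icc 0 1 \ {v}) ∧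
      ∃ w, (w = G.edge i 0 ∨ w = G.edge i 1) ∧ w ∈ G.edge i '' Icc 0 1 \ {v} := by
  by_cases h0 : v = G.edge i 0
  · subst h0
    rw [arc_diff_e0 G hne]
    refine ⟨subarc_preconn G i isPreconnected_Ioc Ioc_subset_Icc_self, G.edge i 1, Or.inr rfl, ?_⟩
    rw [← arc_diff_e0 G hne]
    exact ⟨e1_mem_arc G i, by simpa using hne.symm⟩
  by_cases h1 : v = G.edge i 1
  · subst h1
    rw [arc_diff_e1 G hne]
    refine ⟨subarc_preconn G i isPreconnected_Ico Ico_subset_Icc_self, G.edge i 0, Or.inl rfl, ?_⟩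
    rw [← arc_diff_e1 G hne]
    exact ⟨e0_mem_arc G i, by simpa using hne⟩
  · have hva : v ∉ G.edge i '' Icc 0 1 := by
      intro hva
      rcases vertex_mem_arc G hv hva with h | h
      exacts [h0 h, h1 h]
    have : G.edge i '' Icc 0 1 \ {v} = G.edge i '' Icc 0 1 :=
      diff_singleton_eq_self hva
    rw [this]
    exact ⟨(arc_conn G i).isPreconnected, G.edge i 0, Or.inl rfl, e0_mem_arc G i⟩

end S19

namespace S19

open Set SimpleGraph

/-- The abstract graph on points of the plane with an edge for each index in `T`. -/
def sg (G : FinPlaneGraph) (T : Finset (Fin G.n)) : SimpleGraph Pt where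
  Adj x y := x ≠ y ∧ ∃ j ∈ T,
    (G.edge j 0 = x ∧ G.edge j 1 = y) ∨ (G.edge j 0 = y ∧ G.edge j 1 = x)
  symm := by
    refine ⟨?_⟩; rintro x y ⟨h1, j, hj, h2⟩
    exact ⟨h1.symm, j, hj, h2.symm⟩
  loopless := ⟨fun x h => h.1 rfl⟩

variable {G : FinPlaneGraph} {T : Finset (Fin G.n)}

noncomputable def pickEdge {x y : Pt} (h : (sg G T).Adj x y) : Fin G.n := h.2.choose

theorem pickEdge_mem {x y : Pt} (h : (sg G T).Adj x y) : pickEdge h ∈ T :=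
  h.2.choose_spec.1

theorem pickEdge_spec {x y : Pt} (h : (sg G T).Adj x y) :
    (G.edge (pickEdge h) 0 = x ∧ G.edge (pickEdge h) 1 = y) ∨
    (G.edge (pickEdge h) 0 = y ∧ G.edge (pickEdge h) 1 = x) :=
  h.2.choose_spec.2

theorem pickEdge_ends_ne {x y : Pt} (h : (sg G T).Adj x y) :
    G.edge (pickEdge h) 0 ≠ G.edge (pickEdge h) 1 := by
  rcases pickEdge_spec h with ⟨h0, h1⟩ | ⟨h0, h1⟩ <;> rw [h0, h1]
  · exact h.1
  · exact h.1.symm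

theorem pickEdge_left_mem {x y : Pt} (h : (sg G T).Adj x y) :
    x ∈ G.edge (pickEdge h) '' Icc 0 1 := by
  rcases pickEdge_spec h with ⟨h0, _⟩ | ⟨_, h1⟩
  · exact ⟨0, ⟨le_refl _, zero_le_one⟩, h0⟩
  · exact ⟨1, ⟨zero_le_one, le_refl _⟩, h1⟩

theorem pickEdge_right_mem {x y : Pt} (h : (sg G T).Adj x y) :
    y ∈ G.edge (pickEdge h) '' Icc 0 1 := by
  rcases pickEdge_spec h with ⟨_, h1⟩ | ⟨h0, _⟩
  · exact ⟨1, ⟨zero_le_one, le_refl _⟩, h1⟩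
  · exact ⟨0, ⟨le_refl _, zero_le_one⟩, h0⟩

theorem pickEdge_vertex_cases {x y z : Pt} (h : (sg G T).Adj x y) (hz : z ∈ G.V)
    (hza : z ∈ G.edge (pickEdge h) '' Icc 0 1) : z = x ∨ z = y := by
  rcases vertex_mem_arc G hz hza with h' | h' <;>
    rcases pickEdge_spec h with ⟨h0, h1⟩ | ⟨h0, h1⟩
  · exact Or.inl (h' ▸ h0.symm ▸ rfl)
  · exact Or.inr (h' ▸ h0.symm ▸ rfl)
  · exact Or.inr (h' ▸ h1.symm ▸ rfl)
  · exact Or.inl (h' ▸ h1.symm ▸ rfl)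

noncomputable def walkArcs : {a b : Pt} → (sg G T).Walk a b → Set Pt
  | _, _, .nil => ∅
  | _, _, .cons h p => G.edge (pickEdge h) '' Icc 0 1 ∪ walkArcs p

@[simp] theorem walkArcs_nil {a : Pt} : walkArcs (.nil : (sg G T).Walk a a) = ∅ := rfl

@[simp] theorem walkArcs_cons {a y b : Pt} (h : (sg G T).Adj a y) (p : (sg G T).Walk y b) :
    walkArcs (.cons h p) = G.edge (pickEdge h) '' Icc 0 1 ∪ walkArcs p := rfl

theorem walkArcs_append {a b c : Pt} (p : (sg G T).Walk a b) (q : (sg G T).Walk b c) :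
    walkArcs (p.append q) = walkArcs p ∪ walkArcs q := by
  induction p with
  | nil => simp
  | cons h p IH => simp [Walk.cons_append, IH, Set.union_assoc]

/-- Vertices of `G` lying on the arcs of a walk lie in its support. -/
theorem walkArcs_vertex {a b : Pt} (q : (sg G T).Walk a b) {z : Pt} (hz : z ∈ G.V)
    (hza : z ∈ walkArcs q) : z ∈ q.support := by
  induction q with
  | nil => simp at hza
  | cons h p IH =>
      rcases hza with hza | hza
      · rcases pickEdge_vertex_cases h hz hza with rfl | rfl
        · exact Walk.start_mem_support _
        · rw [Walk.support_cons]
          exact List.mem_cons_of_mem _ (Walk.start_mem_support p)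
      · rw [Walk.support_cons]
        exact List.mem_cons_of_mem _ (IH hza)

/-- Attaching a walk (all of its arcs) to a connected base containing its endpoint. -/
theorem walk_conn (B : Set Pt) (hB : IsConnected B) :
    ∀ {a b : Pt} (q : (sg G T).Walk a b), b ∈ B →
      IsConnected (B ∪ walkArcs q) ∧ ∀ z ∈ q.support, z ∈ B ∪ walkArcs q := by
  intro a b q
  induction q with
  | nil =>
      intro hb
      refine ⟨by simpa using hB, ?_⟩
      intro z hz
      rw [Walk.support_nil] at hz
      simp only [List.mem_singleton] at hz
      exact Or.inl (hz ▸ hb)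
  | @cons a y b h p IH =>
      intro hb
      obtain ⟨hC, hsup⟩ := IH hb
      have hy : y ∈ B ∪ walkArcs p := hsup y (Walk.start_mem_support p)
      have harc : IsConnected (G.edge (pickEdge h) '' Icc 0 1) := arc_conn G _
      have hconn : IsConnected ((B ∪ walkArcs p) ∪ G.edge (pickEdge h) '' Icc 0 1) :=
        IsConnected.union ⟨y, hy, pickEdge_right_mem h⟩ hC harc
      have heq : B ∪ walkArcs (.cons h p) =
          (B ∪ walkArcs p) ∪ G.edge (pickEdge h) '' Icc 0 1 := by
        rw [walkArcs_cons]
        ext z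
        constructor
        · rintro (hz | hz | hz)
          exacts [Or.inl (Or.inl hz), Or.inr hz, Or.inl (Or.inr hz)]
        · rintro ((hz | hz) | hz)
          exacts [Or.inl hz, Or.inr (Or.inr hz), Or.inr (Or.inl hz)]
      refine ⟨heq ▸ hconn, ?_⟩
      intro z hz
      rw [Walk.support_cons] at hz
      rcases List.mem_cons.1 hz with rfl | hz
      · exact Or.inr (Or.inl (pickEdge_left_mem h))
      · rcases hsup z hz with hz' | hz'
        · exact Or.inl hz'
        · exact Or.inr (Or.inr hz')

/-- Removing the first vertex of a walk whose support has no repetitions. -/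
theorem walk_conn_head {v b : Pt} (q : (sg G T).Walk v b) (hnd : q.support.Nodup)
    (B : Set Pt) (hB : IsConnected B) (hbB : b ∈ B) (hvB : v ∉ B) (hvV : v ∈ G.V) :
    IsConnected ((B ∪ walkArcs q) \ {v}) ∧
      ∀ z ∈ q.support, z ≠ v → z ∈ (B ∪ walkArcs q) \ {v} := by
  cases q with
  | nil => exact absurd hbB hvB
  | @cons a y b h p =>
      obtain ⟨hC, hsup⟩ := walk_conn B hB p hbB
      have hvp : v ∉ p.support := by
        rw [Walk.support_cons] at hnd
        exact (List.nodup_cons.1 hnd).1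
      have hvarcs : v ∉ walkArcs p := fun hv => hvp (walkArcs_vertex p hvV hv)
      have hvy : v ≠ y := fun h' => hvp (h' ▸ Walk.start_mem_support p)
      -- the first arc loses v
      obtain ⟨hpre, w, hw, hwmem⟩ := arc_diff_vertex G (pickEdge_ends_ne h) hvV
      have hyarc : y ∈ G.edge (pickEdge h) '' Icc 0 1 \ {v} :=
        ⟨pickEdge_right_mem h, by simpa using hvy.symm⟩
      have hconn : IsConnected ((B ∪ walkArcs p) ∪ (G.edge (pickEdge h) '' Icc 0 1 \ {v})) := by
        refine IsConnected.union ⟨y, hsup y (Walk.start_mem_support p), hyarc⟩ hC ⟨⟨y, hyarc⟩, hpre⟩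
      have heq : (B ∪ walkArcs (.cons h p)) \ {v} =
          (B ∪ walkArcs p) ∪ (G.edge (pickEdge h) '' Icc 0 1 \ {v}) := by
        rw [walkArcs_cons]
        ext z
        constructor
        · rintro ⟨(hz | hz | hz), hzv⟩
          exacts [Or.inl (Or.inl hz), Or.inr ⟨hz, hzv⟩, Or.inl (Or.inr hz)]
        · rintro ((hz | hz) | ⟨hz, hzv⟩)
          · exact ⟨Or.inl hz, fun hzv => hvB ((mem_singleton_iff.1 hzv) ▸ hz)⟩
          · exact ⟨Or.inr (Or.inr hz), fun hzv => hvarcs ((mem_singleton_iff.1 hzv) ▸ hz)⟩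
          · exact ⟨Or.inr (Or.inl hz), hzv⟩
      refine ⟨heq ▸ hconn, ?_⟩
      intro z hz hzv
      rw [heq]
      rw [Walk.support_cons] at hz
      rcases List.mem_cons.1 hz with rfl | hz
      · exact absurd rfl hzv
      · rcases hsup z hz with hz' | hz'
        · exact Or.inl (Or.inl hz')
        · exact Or.inl (Or.inr hz')

/-- Removing the last vertex of a walk whose support has no repetitions. -/
theorem walk_conn_tail : ∀ {a v : Pt} (q : (sg G T).Walk a v), q.support.Nodup →
    ∀ (B : Set Pt), IsConnected B → a ∈ B → v ∉ B → v ∈ G.V →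
    IsConnected ((B ∪ walkArcs q) \ {v}) ∧
      ∀ z ∈ q.support, z ≠ v → z ∈ (B ∪ walkArcs q) \ {v} := by
  intro a v q
  induction q with
  | nil => intro _ B _ haB hvB _; exact absurd haB hvB
  | @cons a y vv h p IH =>
      intro hnd B hB haB hvB hvV
      have hay : a ∉ p.support := by
        rw [Walk.support_cons] at hnd
        exact (List.nodup_cons.1 hnd).1
      have hndp : p.support.Nodup := by
        rw [Walk.support_cons] at hnd
        exact (List.nodup_cons.1 hnd).2
      cases p with
      | nil =>
          -- single arc from a to v
          obtain ⟨hpre, w, hw, hwmem⟩ := arc_diff_vertex G (pickEdge_ends_ne h) hvV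
          have hva : y ≠ a := fun h' => hvB (h' ▸ haB)
          have haarc : a ∈ G.edge (pickEdge h) '' Icc 0 1 \ {y} :=
            ⟨pickEdge_left_mem h, by simpa using h.1⟩
          have hconn : IsConnected (B ∪ (G.edge (pickEdge h) '' Icc 0 1 \ {y})) :=
            IsConnected.union ⟨a, haB, haarc⟩ hB ⟨⟨a, haarc⟩, hpre⟩
          have heq : (B ∪ walkArcs (.cons h .nil)) \ {y} =
              B ∪ (G.edge (pickEdge h) '' Icc 0 1 \ {y}) := by
            rw [walkArcs_cons, walkArcs_nil, union_empty]
            ext z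
            constructor
            · rintro ⟨(hz | hz), hzv⟩
              exacts [Or.inl hz, Or.inr ⟨hz, hzv⟩]
            · rintro (hz | ⟨hz, hzv⟩)
              · exact ⟨Or.inl hz, fun hzv => hvB ((mem_singleton_iff.1 hzv) ▸ hz)⟩
              · exact ⟨Or.inr hz, hzv⟩
          refine ⟨heq ▸ hconn, ?_⟩
          intro z hz hzv
          rw [heq]
          rw [Walk.support_cons, Walk.support_nil] at hz
          rcases List.mem_cons.1 hz with rfl | hz
          · exact Or.inl haB
          · simp only [List.mem_singleton] at hz
            exact absurd hz hzv
      | cons h' p' =>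
          -- apply the IH to the walk `cons h' p'` with base `B ∪ arc`
          have harc : IsConnected (G.edge (pickEdge h) '' Icc 0 1) := arc_conn G _
          have hB' : IsConnected (B ∪ G.edge (pickEdge h) '' Icc 0 1) :=
            IsConnected.union ⟨a, haB, pickEdge_left_mem h⟩ hB harc
          have hyB' : y ∈ B ∪ G.edge (pickEdge h) '' Icc 0 1 :=
            Or.inr (pickEdge_right_mem h)
          have hvy : vv ≠ y := by
            intro heq
            have hvp' : vv ∈ p'.support := Walk.end_mem_support p'
            rw [Walk.support_cons] at hndp
            exact (List.nodup_cons.1 hndp).1 (heq ▸ hvp')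
          have hvB' : vv ∉ B ∪ G.edge (pickEdge h) '' Icc 0 1 := by
            rintro (hv | hv)
            · exact hvB hv
            · rcases pickEdge_vertex_cases h hvV hv with rfl | h''
              · exact hvB haB
              · exact hvy h''
          obtain ⟨hC, hsup⟩ := IH hndp (B ∪ G.edge (pickEdge h) '' Icc 0 1) hB' hyB' hvB' hvV
          have heq : (B ∪ walkArcs (.cons h (.cons h' p'))) \ {vv} =
              ((B ∪ G.edge (pickEdge h) '' Icc 0 1) ∪ walkArcs (.cons h' p')) \ {vv} := by
            rw [walkArcs_cons]
            congr 1
            ext z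
            constructor
            · rintro (hz | hz | hz)
              exacts [Or.inl (Or.inl hz), Or.inl (Or.inr hz), Or.inr hz]
            · rintro ((hz | hz) | hz)
              exacts [Or.inl hz, Or.inr (Or.inl hz), Or.inr (Or.inr hz)]
          refine ⟨heq ▸ hC, ?_⟩
          intro z hz hzv
          rw [heq]
          rw [Walk.support_cons] at hz
          rcases List.mem_cons.1 hz with rfl | hz
          · refine ⟨Or.inl (Or.inl haB), by simpa using (fun h' : z = vv => hvB (h' ▸ haB)) ⟩
          · exact hsup z hz hzv

end S19

namespace S19

open Set SimpleGraph

/-- Trim a walk starting outside `W` to its first hit of `W`. -/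
theorem trim_aux {V : Type*} {SG : SimpleGraph V} (W : Set V) :
    ∀ {x b : V} (q : SG.Walk x b), x ∉ W → b ∈ W →
    ∃ d, d ∈ W ∧ ∃ (r : SG.Walk x d) (rem : SG.Walk d b), rem.length ≤ q.length ∧
      ∀ z ∈ r.support, z = d ∨ z ∉ W := by
  intro x b q
  induction q with
  | nil => intro hx hb; exact absurd hb hx
  | @cons x y b h p IH =>
      intro hx hb
      by_cases hy : y ∈ W
      · refine ⟨y, hy, .cons h .nil, p, ?_, ?_⟩
        · rw [Walk.length_cons]; omega
        · intro z hz
          rw [Walk.support_cons, Walk.support_nil] at hz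
          rcases List.mem_cons.1 hz with rfl | hz
          · exact Or.inr hx
          · simp only [List.mem_singleton] at hz
            exact Or.inl hz
      · obtain ⟨d, hd, r, rem, hlen, hclean⟩ := IH hy hb
        refine ⟨d, hd, .cons h r, rem, ?_, ?_⟩
        · rw [Walk.length_cons]; omega
        · intro z hz
          rw [Walk.support_cons] at hz
          rcases List.mem_cons.1 hz with rfl | hz
          · exact Or.inr hx
          · exact hclean z hz

/-- From any walk between two distinct vertices of `W`, extract a path between two distinct
vertices of `W` whose interior avoids `W`. -/
theorem trim {V : Type*} {SG : SimpleGraph V} [DecidableEq V] (W : Set V) :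
    ∀ (n : ℕ) {a b : V} (q : SG.Walk a b), q.length ≤ n → a ∈ W → b ∈ W → a ≠ b →
    ∃ c d, c ∈ W ∧ d ∈ W ∧ c ≠ d ∧ ∃ (q' : SG.Walk c d), q'.IsPath ∧
      ∀ z ∈ q'.support, z = c ∨ z = d ∨ z ∉ W := by
  intro n
  induction n with
  | zero =>
      intro a b q hlen ha hb hab
      cases q with
      | nil => exact absurd rfl hab
      | cons h p => rw [Walk.length_cons] at hlen; omega
  | succ n IH =>
      intro a b q hlen ha hb hab
      cases q with
      | nil => exact absurd rfl hab
      | @cons a y b h p =>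
          rw [Walk.length_cons] at hlen
          by_cases hy : y ∈ W
          · -- single edge a-y
            refine ⟨a, y, ha, hy, h.ne, (SimpleGraph.Walk.cons h .nil).bypass,
              Walk.bypass_isPath _, ?_⟩
            intro z hz
            have := Walk.support_bypass_subset _ hz
            rw [Walk.support_cons, Walk.support_nil] at this
            rcases List.mem_cons.1 this with rfl | hz'
            · exact Or.inl rfl
            · simp only [List.mem_singleton] at hz'
              exact Or.inr (Or.inl hz')
          · obtain ⟨d, hd, r, rem, hlenrem, hclean⟩ := trim_aux W p hy hb
            by_cases had : a = d
            · subst had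
              exact IH rem (by omega) ha hb hab
            · refine ⟨a, d, ha, hd, had, (SimpleGraph.Walk.cons h r).bypass,
                Walk.bypass_isPath _, ?_⟩
              intro z hz
              have := Walk.support_bypass_subset _ hz
              rw [Walk.support_cons] at this
              rcases List.mem_cons.1 this with rfl | hz'
              · exact Or.inl rfl
              · rcases hclean z hz' with rfl | hz''
                · exact Or.inr (Or.inl rfl)
                · exact Or.inr (Or.inr hz'')

end S19

namespace S19

open Set SimpleGraph

variable {G : FinPlaneGraph} {T : Finset (Fin G.n)}

theorem walk_support_V {a b : Pt} (q : (sg G T).Walk a b) :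
    b ∈ G.V → ∀ z ∈ q.support, z ∈ G.V := by
  induction q with
  | nil =>
      intro hb z hz
      rw [Walk.support_nil] at hz
      simp only [List.mem_singleton] at hz
      exact hz ▸ hb
  | @cons a y b h p IH =>
      intro hb z hz
      rw [Walk.support_cons] at hz
      rcases List.mem_cons.1 hz with rfl | hz
      · rcases pickEdge_spec h with ⟨h0, _⟩ | ⟨_, h1⟩
        · exact h0 ▸ (G.ends _).1
        · exact h1 ▸ (G.ends _).2
      · exact IH hb z hz

theorem walkArcs_sub (P : Pt → Prop) (Ch : Finset (Fin G.n))
    (hCh : ∀ {x y : Pt} (h : (sg G T).Adj x y), P x → P y → pickEdge h ∈ Ch) :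
    ∀ {a b : Pt} (q : (sg G T).Walk a b), (∀ z ∈ q.support, P z) →
      walkArcs q ⊆ ⋃ j ∈ Ch, G.edge j '' Icc 0 1 := by
  intro a b q
  induction q with
  | nil => intro _; simp
  | @cons a y b h p IH =>
      intro hP
      rw [walkArcs_cons]
      have hPa : P a := hP a (Walk.start_mem_support _)
      have hPy : P y := by
        refine hP y ?_
        rw [Walk.support_cons]
        exact List.mem_cons_of_mem _ (Walk.start_mem_support p)
      refine union_subset ?_ (IH (fun z hz => hP z (by rw [Walk.support_cons]; exact List.mem_cons_of_mem _ hz)))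
      exact subset_biUnion_of_mem (u := fun j => G.edge j '' Icc 0 1) (hCh h hPa hPy)

/-- **Case 1**: a path through `T`-edges between two distinct vertices of the block `H`,
internally avoiding `H.W`, contradicts maximality of the block. -/
theorem case1 (G : FinPlaneGraph) (H : G.Sub) (hH : H.IsBlock) (T : Finset (Fin G.n))
    (hT : ∀ j ∈ T, j ∉ H.S)
    {c d : Pt} (hc : c ∈ H.W) (hd : d ∈ H.W) (hcd : c ≠ d)
    (q : (sg G T).Walk c d) (hq : q.IsPath)
    (hclean : ∀ z ∈ q.support, z = c ∨ z = d ∨ z ∉ (H.W : Set Pt)) : False := by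
  classical
  have hdV : d ∈ G.V := H.hW hd
  have hcV : c ∈ G.V := H.hW hc
  have hVsup : ∀ z ∈ q.support, z ∈ G.V := walk_support_V q hdV
  set Wnew : Finset Pt := H.W ∪ q.support.toFinset with hWnewdef
  have hsupW : ∀ z ∈ q.support, z ∈ Wnew := fun z hz =>
    Finset.mem_union_right _ (List.mem_toFinset.2 hz)
  have hHWnew : H.W ⊆ Wnew := Finset.subset_union_left
  set Chords : Finset (Fin G.n) :=
    T.filter (fun j => G.edge j 0 ≠ G.edge j 1 ∧ G.edge j 0 ∈ Wnew ∧ G.edge j 1 ∈ Wnew)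
    with hChdef
  have hChT : ∀ j ∈ Chords, j ∈ T := fun j hj => (Finset.mem_filter.1 hj).1
  have hChne : ∀ j ∈ Chords, G.edge j 0 ≠ G.edge j 1 :=
    fun j hj => (Finset.mem_filter.1 hj).2.1
  have hChW : ∀ j ∈ Chords, G.edge j 0 ∈ Wnew ∧ G.edge j 1 ∈ Wnew :=
    fun j hj => (Finset.mem_filter.1 hj).2.2
  have hstep : ∀ {x y : Pt} (h : (sg G T).Adj x y), x ∈ Wnew → y ∈ Wnew →
      pickEdge h ∈ Chords := by
    intro x y h hx hy
    refine Finset.mem_filter.2 ⟨pickEdge_mem h, pickEdge_ends_ne h, ?_⟩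
    rcases pickEdge_spec h with ⟨h0, h1⟩ | ⟨h0, h1⟩
    · exact ⟨h0.symm ▸ hx, h1.symm ▸ hy⟩
    · exact ⟨h0.symm ▸ hy, h1.symm ▸ hx⟩
  set Snew : Finset (Fin G.n) := H.S ∪ Chords with hSnewdef
  have hWV : Wnew ⊆ G.V := by
    refine Finset.union_subset H.hW ?_
    intro z hz
    exact hVsup z (List.mem_toFinset.1 hz)
  set H' : G.Sub := ⟨Wnew, Snew, hWV, by
    intro i hi
    rcases Finset.mem_union.1 hi with hi | hi
    · exact ⟨hHWnew (H.hends i hi).1, hHWnew (H.hends i hi).2⟩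
    · exact hChW i hi⟩ with hH'def
  -- the carrier identity
  have hwa_sub : walkArcs q ⊆ ⋃ j ∈ Chords, G.edge j '' Icc 0 1 :=
    walkArcs_sub (fun z => z ∈ Wnew) Chords (fun h hx hy => hstep h hx hy) q hsupW
  have hHconn : IsConnected H.carrier := hH.1.1
  have hdH : d ∈ H.carrier := Or.inl hd
  have hcH : c ∈ H.carrier := Or.inl hc
  obtain ⟨hcore0, hsup0⟩ := walk_conn H.carrier hHconn q hdH
  set Carr : Set Pt := H.carrier ∪ ⋃ j ∈ Chords, G.edge j '' Icc 0 1 with hCarrdef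
  have hsupCarr : ∀ z ∈ q.support, z ∈ Carr := by
    intro z hz
    rcases hsup0 z hz with h | h
    · exact Or.inl h
    · exact Or.inr (hwa_sub h)
  have hcarrier : H'.carrier = Carr := by
    apply subset_antisymm
    · rintro x (hx | hx)
      · -- x ∈ Wnew
        rcases Finset.mem_union.1 hx with hx | hx
        · exact Or.inl (Or.inl hx)
        · exact hsupCarr x (List.mem_toFinset.1 hx)
      · simp only [mem_iUnion, exists_prop] at hx
        obtain ⟨i, hi, hxa⟩ := hx
        rcases Finset.mem_union.1 hi with hi | hi
        · exact Or.inl (Or.inr (mem_iUnion₂.2 ⟨i, hi, hxa⟩))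
        · exact Or.inr (mem_iUnion₂.2 ⟨i, hi, hxa⟩)
    · rintro x (hx | hx)
      · rcases hx with hx | hx
        · exact Or.inl (Finset.mem_union_left _ hx)
        · simp only [mem_iUnion, exists_prop] at hx
          obtain ⟨i, hi, hxa⟩ := hx
          exact Or.inr (mem_iUnion₂.2 ⟨i, Finset.mem_union_left _ hi, hxa⟩)
      · simp only [mem_iUnion, exists_prop] at hx
        obtain ⟨i, hi, hxa⟩ := hx
        exact Or.inr (mem_iUnion₂.2 ⟨i, Finset.mem_union_right _ hi, hxa⟩)
  -- connectivity of the new carrier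
  have hCarr_eq : Carr = (H.carrier ∪ walkArcs q) ∪ ⋃ j ∈ Chords, G.edge j '' Icc 0 1 := by
    apply subset_antisymm
    · rintro x (hx | hx)
      · exact Or.inl (Or.inl hx)
      · exact Or.inr hx
    · rintro x ((hx | hx) | hx)
      · exact Or.inl hx
      · exact Or.inr (hwa_sub hx)
      · exact Or.inr hx
  have hCarr_conn : IsConnected Carr := by
    rw [hCarr_eq]
    refine union_family hcore0 Chords _ ?_
    intro j hj
    refine ⟨(arc_conn G j).isPreconnected, G.edge j 0, e0_mem_arc G j, ?_⟩
    rcases Finset.mem_union.1 ((hChW j hj).1) with h | h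
    · exact Or.inl (Or.inl h)
    · exact hsup0 _ (List.mem_toFinset.1 h)
  -- connectivity after removing one vertex
  have hremove : ∀ v ∈ Wnew, IsConnected (Carr \ {v}) := by
    intro v hv
    have hvV : v ∈ G.V := hWV hv
    -- step 1: the core without v
    have hcore : IsConnected ((H.carrier ∪ walkArcs q) \ {v}) ∧
        ∀ z ∈ q.support, z ≠ v → z ∈ (H.carrier ∪ walkArcs q) \ {v} := by
      by_cases hvsup : v ∈ q.support
      · rcases eq_or_ne v c with rfl | hvc
        · -- v = c
          have hB : IsConnected (H.carrier \ {v}) := hH.1.2 v hc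
          have hdB : d ∈ H.carrier \ {v} := ⟨hdH, by simpa using hcd.symm⟩
          have hvB : v ∉ H.carrier \ {v} := fun h => h.2 rfl
          obtain ⟨h1, h2⟩ := walk_conn_head q hq.support_nodup _ hB hdB hvB hvV
          have heq : ((H.carrier \ {v}) ∪ walkArcs q) \ {v} =
              (H.carrier ∪ walkArcs q) \ {v} := by
            ext z
            constructor
            · rintro ⟨(hz | hz), hzv⟩
              exacts [⟨Or.inl hz.1, hzv⟩, ⟨Or.inr hz, hzv⟩]
            · rintro ⟨(hz | hz), hzv⟩
              exacts [⟨Or.inl ⟨hz, hzv⟩, hzv⟩, ⟨Or.inr hz, hzv⟩]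
          rw [← heq]
          exact ⟨h1, fun z hz hzv => heq ▸ (h2 z hz hzv)⟩
        rcases eq_or_ne v d with rfl | hvd
        · -- v = d
          have hB : IsConnected (H.carrier \ {v}) := hH.1.2 v hd
          have hcB : c ∈ H.carrier \ {v} := ⟨hcH, by simpa using hvc.symm⟩
          have hvB : v ∉ H.carrier \ {v} := fun h => h.2 rfl
          obtain ⟨h1, h2⟩ := walk_conn_tail q hq.support_nodup _ hB hcB hvB hvV
          have heq : ((H.carrier \ {v}) ∪ walkArcs q) \ {v} =
              (H.carrier ∪ walkArcs q) \ {v} := by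
            ext z
            constructor
            · rintro ⟨(hz | hz), hzv⟩
              exacts [⟨Or.inl hz.1, hzv⟩, ⟨Or.inr hz, hzv⟩]
            · rintro ⟨(hz | hz), hzv⟩
              exacts [⟨Or.inl ⟨hz, hzv⟩, hzv⟩, ⟨Or.inr hz, hzv⟩]
          rw [← heq]
          exact ⟨h1, fun z hz hzv => heq ▸ (h2 z hz hzv)⟩
        · -- v internal
          have hvW : v ∉ H.W := by
            rcases hclean v hvsup with rfl | rfl | h
            exacts [absurd rfl hvc, absurd rfl hvd, h]
          have hvH : v ∉ H.carrier := fun h => hvW (vertexH G H hvV h)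
          set q₁ := q.takeUntil v hvsup with hq₁
          set q₂ := q.dropUntil v hvsup with hq₂
          have hspec : q₁.append q₂ = q := q.take_spec hvsup
          have hwa : walkArcs q = walkArcs q₁ ∪ walkArcs q₂ := by
            rw [← hspec, walkArcs_append]
          have hnd1 : q₁.support.Nodup := (hq.takeUntil hvsup).support_nodup
          have hnd2 : q₂.support.Nodup := (hq.dropUntil hvsup).support_nodup
          obtain ⟨h1, h12⟩ := walk_conn_tail q₁ hnd1 H.carrier hHconn hcH hvH hvV
          obtain ⟨h2, h22⟩ := walk_conn_head q₂ hnd2 H.carrier hHconn hdH hvH hvV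
          have hcv : c ∈ (H.carrier ∪ walkArcs q₁) \ {v} :=
            ⟨Or.inl hcH, by simpa using hvc.symm⟩
          have hcv2 : c ∈ (H.carrier ∪ walkArcs q₂) \ {v} :=
            ⟨Or.inl hcH, by simpa using hvc.symm⟩
          have hu : IsConnected (((H.carrier ∪ walkArcs q₁) \ {v}) ∪
              ((H.carrier ∪ walkArcs q₂) \ {v})) :=
            IsConnected.union ⟨c, hcv, hcv2⟩ h1 h2
          have heq : ((H.carrier ∪ walkArcs q₁) \ {v}) ∪ ((H.carrier ∪ walkArcs q₂) \ {v}) =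
              (H.carrier ∪ walkArcs q) \ {v} := by
            rw [hwa]
            ext z
            constructor
            · rintro (⟨(hz | hz), hzv⟩ | ⟨(hz | hz), hzv⟩)
              exacts [⟨Or.inl hz, hzv⟩, ⟨Or.inr (Or.inl hz), hzv⟩,
                ⟨Or.inl hz, hzv⟩, ⟨Or.inr (Or.inr hz), hzv⟩]
            · rintro ⟨(hz | hz | hz), hzv⟩
              exacts [Or.inl ⟨Or.inl hz, hzv⟩, Or.inl ⟨Or.inr hz, hzv⟩,
                Or.inr ⟨Or.inr hz, hzv⟩]
          refine ⟨heq ▸ hu, ?_⟩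
          intro z hz hzv
          have hzq : z ∈ q₁.support ∨ z ∈ q₂.support := by
            rw [← hspec, Walk.support_append] at hz
            rcases List.mem_append.1 hz with h | h
            · exact Or.inl h
            · right
              have : q₂.support = v :: q₂.support.tail := Walk.support_eq_cons q₂
              rw [this]
              exact List.mem_cons_of_mem _ h
          rw [← heq]
          rcases hzq with h | h
          · exact Or.inl (h12 z h hzv)
          · exact Or.inr (h22 z h hzv)
      · -- v not on the walk: v ∈ H.W
        have hvW : v ∈ H.W := by
          rcases Finset.mem_union.1 hv with h | h
          · exact h
          · exact absurd (List.mem_toFinset.1 h) hvsup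
        have hvwa : v ∉ walkArcs q := fun h => hvsup (walkArcs_vertex q hvV h)
        have hdv : d ≠ v := fun h => hvsup (h ▸ Walk.end_mem_support q)
        have hB : IsConnected (H.carrier \ {v}) := hH.1.2 v hvW
        have hdB : d ∈ H.carrier \ {v} := ⟨hdH, by simpa using hdv⟩
        obtain ⟨h1, h2⟩ := walk_conn _ hB q hdB
        have heq : (H.carrier \ {v}) ∪ walkArcs q = (H.carrier ∪ walkArcs q) \ {v} := by
          ext z
          constructor
          · rintro (⟨hz, hzv⟩ | hz)
            · exact ⟨Or.inl hz, hzv⟩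
            · exact ⟨Or.inr hz, fun h => hvwa ((mem_singleton_iff.1 h) ▸ hz)⟩
          · rintro ⟨(hz | hz), hzv⟩
            · exact Or.inl ⟨hz, hzv⟩
            · exact Or.inr hz
        rw [← heq]
        refine ⟨h1, fun z hz hzv => heq ▸ (h2 z hz)⟩
    -- step 2: attach the chords minus v
    have hCarr_v : Carr \ {v} = ((H.carrier ∪ walkArcs q) \ {v}) ∪
        ⋃ j ∈ Chords, (G.edge j '' Icc 0 1 \ {v}) := by
      rw [hCarr_eq]
      ext z
      constructor
      · rintro ⟨((hz | hz) | hz), hzv⟩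
        · exact Or.inl ⟨Or.inl hz, hzv⟩
        · exact Or.inl ⟨Or.inr hz, hzv⟩
        · simp only [mem_iUnion, exists_prop] at hz
          obtain ⟨j, hj, hja⟩ := hz
          exact Or.inr (mem_iUnion₂.2 ⟨j, hj, hja, hzv⟩)
      · rintro (⟨(hz | hz), hzv⟩ | hz)
        · exact ⟨Or.inl (Or.inl hz), hzv⟩
        · exact ⟨Or.inl (Or.inr hz), hzv⟩
        · simp only [mem_iUnion, exists_prop] at hz
          obtain ⟨j, hj, hja, hzv⟩ := hz
          exact ⟨Or.inr (mem_iUnion₂.2 ⟨j, hj, hja⟩), hzv⟩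
    rw [hCarr_v]
    refine union_family hcore.1 Chords _ ?_
    intro j hj
    obtain ⟨hpre, w, hw, hwmem⟩ := arc_diff_vertex G (hChne j hj) hvV
    refine ⟨hpre, w, hwmem, ?_⟩
    have hwWnew : w ∈ Wnew := by
      rcases hw with rfl | rfl
      exacts [(hChW j hj).1, (hChW j hj).2]
    have hwv : w ≠ v := by simpa using hwmem.2
    rcases Finset.mem_union.1 hwWnew with h | h
    · exact ⟨Or.inl (Or.inl h), by simpa using hwv⟩
    · exact hcore.2 w (List.mem_toFinset.1 h) hwv
  -- conclude with maximality
  have htc : H'.TwoConnected := by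
    constructor
    · rw [hcarrier]; exact hCarr_conn
    · intro v hv
      rw [hcarrier]
      exact hremove v hv
  obtain ⟨hWeq, hSeq⟩ := hH.2 H' htc hHWnew Finset.subset_union_left
  -- q is non-trivial, giving a new edge in Snew \ H.S
  cases q with
  | nil => exact hcd rfl
  | @cons c y d h p =>
      have hy : y ∈ Wnew := hsupW y (by
        rw [Walk.support_cons]
        exact List.mem_cons_of_mem _ (Walk.start_mem_support p))
      have hcWnew : c ∈ Wnew := hHWnew hc
      have hj : pickEdge h ∈ Chords := hstep h hcWnew hy
      have hjS : pickEdge h ∈ H.S := by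
        rw [← hSeq]
        exact Finset.mem_union_right _ hj
      exact hT _ (pickEdge_mem h) hjS

end S19

/-- If every inner face of a finite plane graph `G` is
bounded by a simple closed curve, then every inner face of a block `H` of `G`
is an inner face of `G`. -/
theorem stmt_19 (G : FinPlaneGraph)
    (hfaces : ∀ f : Set (EuclideanSpace ℝ (Fin 2)), IsInnerFace G.carrier f →
      Nonempty (↥(frontier f) ≃ₜ
        ↥(Metric.sphere (0 : EuclideanSpace ℝ (Fin 2)) 1)))
    (H : G.Sub) (hH : H.IsBlock) :
    ∀ f : Set (EuclideanSpace ℝ (Fin 2)),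
      IsInnerFace H.carrier f → IsInnerFace G.carrier f := by
  classical
  rintro f ⟨⟨x₀, hx₀, hfeq⟩, hbdd⟩
  have hHcl := S19.Hcar_closed G H
  have hGcl := S19.Gcar_closed G
  have hHo : IsOpen H.carrierᶜ := hHcl.isOpen_compl
  have hGo : IsOpen G.carrierᶜ := hGcl.isOpen_compl
  have hfo : IsOpen f := by rw [hfeq]; exact hHo.connectedComponentIn
  have hx₀f : x₀ ∈ f := by rw [hfeq]; exact mem_connectedComponentIn hx₀
  have hfconn : IsConnected f := by
    rw [hfeq]; exact isConnected_connectedComponentIn_iff.2 hx₀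
  have hfsub : f ⊆ H.carrierᶜ := by rw [hfeq]; exact connectedComponentIn_subset _ _
  have hfrf : frontier f ⊆ H.carrier := by
    have := S19.frontier_ccIn hHo x₀
    rw [← hfeq, compl_compl] at this
    exact this
  have hcomp : ∀ x ∈ f, connectedComponentIn H.carrierᶜ x = f := by
    intro x hx
    rw [hfeq] at hx ⊢
    exact (connectedComponentIn_eq hx).symm
  -- Main claim: no point of G lies in f.
  have hkey : f ∩ G.carrier = ∅ := by
    by_contra hnemp
    rw [← ne_eq, ← nonempty_iff_ne_empty] at hnemp
    obtain ⟨p, hpf, hpG⟩ := hnemp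
    set T : Finset (Fin G.n) :=
      Finset.univ.filter (fun i => i ∉ H.S ∧ G.edge i '' Ioo 0 1 ⊆ f) with hTdef
    have hTS : ∀ j ∈ T, j ∉ H.S := fun j hj => (Finset.mem_filter.1 hj).2.1
    have hTf : ∀ j ∈ T, G.edge j '' Ioo 0 1 ⊆ f := fun j hj => (Finset.mem_filter.1 hj).2.2
    have hmemT : ∀ (i : Fin G.n) (t : ℝ), t ∈ Ioo (0:ℝ) 1 → G.edge i t ∈ f → i ∈ T := by
      intro i t ht hitf
      have hiS : i ∉ H.S := by
        intro hiS
        exact (hfsub hitf) (S19.arc_sub_Hcar G H hiS ⟨t, Ioo_subset_Icc_self ht, rfl⟩)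
      refine Finset.mem_filter.2 ⟨Finset.mem_univ _, hiS, ?_⟩
      have hpre : IsPreconnected (G.edge i '' Ioo 0 1) :=
        S19.subarc_preconn G i isPreconnected_Ioo Ioo_subset_Icc_self
      have hsubHc : G.edge i '' Ioo 0 1 ⊆ H.carrierᶜ := by
        rintro _ ⟨s, hs, rfl⟩
        exact S19.int_arc_avoid G H hiS hs
      have := hpre.subset_connectedComponentIn (x := G.edge i t) ⟨t, ht, rfl⟩ hsubHc
      rwa [hcomp _ hitf] at this
    have hendT : ∀ (j : Fin G.n) (w : S19.Pt), (w = G.edge j 0 ∨ w = G.edge j 1) →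
        w ∈ f → j ∈ T := by
      intro j w hw hwf
      have hwarc : w ∈ G.edge j '' Icc 0 1 := by
        rcases hw with rfl | rfl
        exacts [S19.e0_mem_arc G j, S19.e1_mem_arc G j]
      have hwcl : w ∈ closure (G.edge j '' Ioo 0 1) := S19.arc_closure_int G j hwarc
      rw [_root_.mem_closure_iff] at hwcl
      obtain ⟨z, hz1, hz2⟩ := hwcl f hfo hwf
      obtain ⟨t, ht, rfl⟩ := hz2
      exact hmemT j t ht hz1
    set SG := S19.sg G T with hSGdef
    by_cases hreach : ∃ u u', u ∈ H.W ∧ u' ∈ H.W ∧ u ≠ u' ∧ SG.Reachable u u'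
    · obtain ⟨u, u', hu, hu', huu, hr⟩ := hreach
      obtain ⟨q⟩ := hr
      obtain ⟨c, d, hcW, hdW, hcd, q', hq', hclean⟩ :=
        S19.trim (↑H.W : Set S19.Pt) q.length q le_rfl hu hu' huu
      exact S19.case1 G H hH T hTS hcW hdW hcd q' hq' hclean
    · push_neg at hreach
      have hseed : ∃ v : S19.Pt, v ∈ G.V ∧
          (v ∈ f ∨ ∃ i₀ ∈ T, v = G.edge i₀ 0 ∧
            (G.edge i₀ '' Icc 0 1 ∩ f).Nonempty) := by
        rcases hpG with hpV | hpa
        · exact ⟨p, hpV, Or.inl hpf⟩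
        · simp only [mem_iUnion] at hpa
          obtain ⟨i₀, t, ht, rfl⟩ := hpa
          rcases eq_or_lt_of_le ht.1 with h0 | h0
          · exact ⟨G.edge i₀ t, by rw [← h0]; exact (G.ends i₀).1, Or.inl hpf⟩
          rcases eq_or_lt_of_le ht.2 with h1 | h1
          · exact ⟨G.edge i₀ t, by rw [h1]; exact (G.ends i₀).2, Or.inl hpf⟩
          · have hi₀ : i₀ ∈ T := hmemT i₀ t ⟨h0, h1⟩ hpf
            exact ⟨G.edge i₀ 0, (G.ends i₀).1, Or.inr ⟨i₀, hi₀, rfl,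
              ⟨G.edge i₀ t, ⟨t, ht, rfl⟩, hpf⟩⟩⟩
      obtain ⟨v, hvV, hvseed⟩ := hseed
      set Es : Set (Fin G.n) := {j | j ∈ T ∧ SG.Reachable v (G.edge j 0)} with hEsdef
      set K : Set S19.Pt := {v} ∪ ⋃ j ∈ Es, G.edge j '' Icc 0 1 with hKdef
      have hKcl : IsClosed K :=
        isClosed_singleton.union (Set.Finite.isClosed_biUnion (Set.toFinite _)
          (fun j _ => (S19.arc_compact G j).isClosed))
      have hadj_or : ∀ j ∈ T, ∀ w : S19.Pt, (w = G.edge j 0 ∨ w = G.edge j 1) →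
          SG.Reachable (G.edge j 0) w := by
        intro j hj w hw
        rcases hw with rfl | rfl
        · exact SimpleGraph.Reachable.refl _
        · by_cases he : G.edge j 0 = G.edge j 1
          · rw [← he]
          · exact SimpleGraph.Adj.reachable ⟨he, j, hj, Or.inl ⟨rfl, rfl⟩⟩
      have hreachEs : ∀ j ∈ Es, ∀ w : S19.Pt, (w = G.edge j 0 ∨ w = G.edge j 1) →
          SG.Reachable v w := fun j hj w hw => (hj.2).trans (hadj_or j hj.1 w hw)
      have hEsmem : ∀ j ∈ T, ∀ w : S19.Pt, (w = G.edge j 0 ∨ w = G.edge j 1) →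
          SG.Reachable v w → j ∈ Es := by
        intro j hj w hw hrw
        exact ⟨hj, hrw.trans (hadj_or j hj w hw).symm⟩
      have hK_cases : ∀ x ∈ K, x = v ∨ ∃ j ∈ Es, x ∈ G.edge j '' Icc 0 1 := by
        intro x hx
        rcases hx with hx | hx
        · exact Or.inl hx
        · simp only [mem_iUnion, exists_prop] at hx
          exact Or.inr hx
      have hKG : K ⊆ G.carrier := by
        rintro x (hx | hx)
        · exact Or.inl (mem_singleton_iff.1 hx ▸ hvV)
        · simp only [mem_iUnion, exists_prop] at hx
          obtain ⟨j, _, hxa⟩ := hx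
          exact Or.inr (mem_iUnion.2 ⟨j, hxa⟩)
      have hendHf : ∀ j ∈ T, ∀ w : S19.Pt, (w = G.edge j 0 ∨ w = G.edge j 1) →
          w ∈ f ∨ w ∈ H.carrier := by
        intro j hj w hw
        have hwarc : w ∈ G.edge j '' Icc 0 1 := by
          rcases hw with rfl | rfl
          exacts [S19.e0_mem_arc G j, S19.e1_mem_arc G j]
        have hwcl : w ∈ closure f :=
          closure_mono (hTf j hj) (S19.arc_closure_int G j hwarc)
        by_cases hwf : w ∈ f
        · exact Or.inl hwf
        · refine Or.inr (hfrf ?_)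
          rw [hfo.frontier_eq]
          exact ⟨hwcl, hwf⟩
      have hvfH : v ∈ f ∨ v ∈ H.carrier := by
        rcases hvseed with h | ⟨i₀, hi₀, hveq, _⟩
        · exact Or.inl h
        · exact hendHf i₀ hi₀ v (Or.inl hveq)
      set A : Set S19.Pt := K ∩ H.carrier with hAdef
      have hAK : A ⊆ K := inter_subset_left
      have hAsub : ∀ x ∈ A, x ∈ H.W ∧ SG.Reachable v x := by
        rintro x ⟨hxK, hxH⟩
        rcases hK_cases x hxK with rfl | ⟨j, hj, hxa⟩
        · exact ⟨S19.vertexH G H hvV hxH, SimpleGraph.Reachable.refl _⟩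
        · obtain ⟨t, ht, rfl⟩ := hxa
          have hxe : G.edge j t = G.edge j 0 ∨ G.edge j t = G.edge j 1 := by
            rcases eq_or_lt_of_le ht.1 with h0 | h0
            · exact Or.inl (by rw [← h0])
            rcases eq_or_lt_of_le ht.2 with h1 | h1
            · exact Or.inr (by rw [h1])
            · exact absurd hxH (S19.int_arc_avoid G H (hTS j hj.1) ⟨h0, h1⟩)
          have hxV : G.edge j t ∈ G.V := by
            rcases hxe with h | h
            · rw [h]; exact (G.ends j).1
            · rw [h]; exact (G.ends j).2
          exact ⟨S19.vertexH G H hxV hxH, hreachEs j hj _ hxe⟩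
      have hAss : A.Subsingleton := by
        intro x hx y hy
        by_contra hxy
        obtain ⟨hxW, hxr⟩ := hAsub x hx
        obtain ⟨hyW, hyr⟩ := hAsub y hy
        exact hreach x y hxW hyW hxy (hxr.symm.trans hyr)
      have hAcl : IsClosed A := hKcl.inter hHcl
      have hAf : ∀ y ∈ f, y ∉ A := fun y hy hyA => (hfsub hy) hyA.2
      set L : Set S19.Pt :=
        (⋃ j ∈ {j : Fin G.n | j ∉ Es}, G.edge j '' Icc 0 1) ∪ (↑G.V \ K) with hLdef
      have hLcl : IsClosed L := by
        refine IsClosed.union (Set.Finite.isClosed_biUnion (Set.toFinite _)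
          (fun j _ => (S19.arc_compact G j).isClosed)) ?_
        exact (G.V.finite_toSet.diff : (↑G.V \ K).Finite).isClosed
      have hLG : L ⊆ G.carrier := by
        rintro x (hx | hx)
        · simp only [mem_iUnion, exists_prop] at hx
          obtain ⟨j, _, hxa⟩ := hx
          exact Or.inr (mem_iUnion.2 ⟨j, hxa⟩)
        · exact Or.inl hx.1
      have hGKL : G.carrier ⊆ K ∪ L := by
        rintro x (hx | hx)
        · by_cases hxK : x ∈ K
          · exact Or.inl hxK
          · exact Or.inr (Or.inr ⟨hx, hxK⟩)
        · simp only [mem_iUnion] at hx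
          obtain ⟨j, hxa⟩ := hx
          by_cases hj : j ∈ Es
          · exact Or.inl (Or.inr (mem_iUnion₂.2 ⟨j, hj, hxa⟩))
          · exact Or.inr (Or.inl (mem_iUnion₂.2 ⟨j, hj, hxa⟩))
      have hKL : ∀ x, x ∈ K → x ∈ L → x ∈ A := by
        intro x hxK hxL
        rcases hxL with hxL | hxL
        swap
        · exact absurd hxK hxL.2
        simp only [mem_iUnion, exists_prop, mem_setOf_eq] at hxL
        obtain ⟨j', hj', hxa'⟩ := hxL
        rcases hK_cases x hxK with rfl | ⟨j, hj, hxa⟩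
        · have hve : x = G.edge j' 0 ∨ x = G.edge j' 1 := S19.vertex_mem_arc G hvV hxa'
          rcases hvfH with hvf | hvH
          · have hj'T : j' ∈ T := hendT j' x hve hvf
            exact absurd (hEsmem j' hj'T x hve (SimpleGraph.Reachable.refl _)) hj'
          · exact ⟨Or.inl rfl, hvH⟩
        · have hjj' : j ≠ j' := fun h => hj' (h ▸ hj)
          obtain ⟨t, ht, rfl⟩ := hxa
          have hxe : G.edge j t = G.edge j 0 ∨ G.edge j t = G.edge j 1 := by
            rcases eq_or_lt_of_le ht.1 with h0 | h0
            · exact Or.inl (by rw [← h0])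
            rcases eq_or_lt_of_le ht.2 with h1 | h1
            · exact Or.inr (by rw [h1])
            · exact absurd hxa' (G.edges_meet_at_ends j j' hjj' t ⟨h0, h1⟩)
          have hxV : G.edge j t ∈ G.V := by
            rcases hxe with h | h
            · rw [h]; exact (G.ends j).1
            · rw [h]; exact (G.ends j).2
          have hxe' : G.edge j t = G.edge j' 0 ∨ G.edge j t = G.edge j' 1 :=
            S19.vertex_mem_arc G hxV hxa'
          rcases hendHf j hj.1 _ hxe with hxf | hxH
          · have hj'T : j' ∈ T := hendT j' _ hxe' hxf
            exact absurd (hEsmem j' hj'T _ hxe' (hreachEs j hj _ hxe)) hj'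
          · exact ⟨Or.inr (mem_iUnion₂.2 ⟨j, hj, ⟨t, ht, rfl⟩⟩), hxH⟩
      have hKf : (K ∩ f).Nonempty := by
        rcases hvseed with hvf | ⟨i₀, hi₀, hveq, hne0⟩
        · exact ⟨v, Or.inl rfl, hvf⟩
        · obtain ⟨z, hza, hzf⟩ := hne0
          have hi₀Es : i₀ ∈ Es := ⟨hi₀, by rw [hveq]⟩
          exact ⟨z, Or.inr (mem_iUnion₂.2 ⟨i₀, hi₀Es, hza⟩), hzf⟩
      have hFace : ∀ y : S19.Pt, y ∈ f → y ∉ G.carrier →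
          (connectedComponentIn G.carrierᶜ y ⊆ f) ∧
          frontier (connectedComponentIn G.carrierᶜ y) ⊆ G.carrier ∧
          (frontier (connectedComponentIn G.carrierᶜ y) \ A ⊆ K ∨
           frontier (connectedComponentIn G.carrierᶜ y) \ A ⊆ L) := by
        intro y hyf hyG
        have hsubf : connectedComponentIn G.carrierᶜ y ⊆ f := by
          have h1 := connectedComponentIn_mono y (compl_subset_compl.2 (S19.Hcar_sub G H))
          rwa [hcomp y hyf] at h1
        have hfr : frontier (connectedComponentIn G.carrierᶜ y) ⊆ G.carrier := by
          have := S19.frontier_ccIn hGo y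
          rwa [compl_compl] at this
        refine ⟨hsubf, hfr, ?_⟩
        have hface : IsInnerFace G.carrier (connectedComponentIn G.carrierᶜ y) :=
          ⟨⟨y, hyG, rfl⟩, hbdd.subset hsubf⟩
        obtain ⟨e⟩ := hfaces _ hface
        have hpre : IsPreconnected (frontier (connectedComponentIn G.carrierᶜ y) \ A) :=
          S19.circle_diff_preconn e hAss
        by_contra hcon
        push_neg at hcon
        obtain ⟨h1, h2⟩ := hcon
        rw [not_subset] at h1 h2
        obtain ⟨z₁, hz₁, hz₁K⟩ := h1
        obtain ⟨z₂, hz₂, hz₂L⟩ := h2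
        have hcover : frontier (connectedComponentIn G.carrierᶜ y) \ A ⊆ K ∪ L :=
          fun w hw => hGKL (hfr hw.1)
        obtain ⟨w, hw, hwK, hwL⟩ := isPreconnected_closed_iff.1 hpre K L hKcl hLcl hcover
          ⟨z₂, hz₂, (hcover hz₂).resolve_right hz₂L⟩ ⟨z₁, hz₁, (hcover hz₁).resolve_left hz₁K⟩
        exact hw.2 (hKL w hwK hwL)
      set P : Set S19.Pt := (K ∩ f) ∪
        {y | (y ∈ f ∧ y ∉ G.carrier) ∧
          frontier (connectedComponentIn G.carrierᶜ y) \ A ⊆ K} with hPdef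
      set Q : Set S19.Pt := (L ∩ f) ∪
        {y | (y ∈ f ∧ y ∉ G.carrier) ∧
          ¬ frontier (connectedComponentIn G.carrierᶜ y) \ A ⊆ K} with hQdef
      have hPf : P ⊆ f := by rintro y (hy | hy); exacts [hy.2, hy.1.1]
      have hQf : Q ⊆ f := by rintro y (hy | hy); exacts [hy.2, hy.1.1]
      have hcoverPQ : ∀ y ∈ f, y ∈ P ∪ Q := by
        intro y hy
        by_cases hyG : y ∈ G.carrier
        · rcases hGKL hyG with h | h
          · exact Or.inl (Or.inl ⟨h, hy⟩)
          · exact Or.inr (Or.inl ⟨h, hy⟩)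
        · by_cases hAcase : frontier (connectedComponentIn G.carrierᶜ y) \ A ⊆ K
          · exact Or.inl (Or.inr ⟨⟨hy, hyG⟩, hAcase⟩)
          · exact Or.inr (Or.inr ⟨⟨hy, hyG⟩, hAcase⟩)
      have hball : ∀ (y : S19.Pt) (r : ℝ) (z : S19.Pt), z ∈ Metric.ball y r → z ∈ f →
          z ∉ G.carrier →
          Metric.ball y r ∩ frontier (connectedComponentIn G.carrierᶜ z) = ∅ →
          Metric.ball y r ⊆ connectedComponentIn G.carrierᶜ z := by
        intro y r z hzb hzf hzG hfr
        exact S19.absorb (convex_ball y r).isPreconnected hGo.connectedComponentIn hfr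
          ⟨z, hzb, mem_connectedComponentIn hzG⟩
      have hQne : (f ∩ closure Q).Nonempty := by
        by_contra hq
        rw [not_nonempty_iff_eq_empty] at hq
        have hQe : Q = ∅ := by
          rw [← subset_empty_iff, ← hq]
          exact fun y hy => ⟨hQf hy, subset_closure hy⟩
        obtain ⟨z, hzfr, hzA⟩ := S19.frontier_pair hfo ⟨x₀, hx₀f⟩ hbdd hAss
        have hzH : z ∈ H.carrier := hfrf hzfr
        have hzK : z ∉ K := fun h => hzA ⟨h, hzH⟩
        obtain ⟨r, hr, hrK⟩ : ∃ r > 0, Metric.ball z r ⊆ Kᶜ :=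
          Metric.isOpen_iff.1 hKcl.isOpen_compl z hzK
        obtain ⟨y', hy'b, hy'f⟩ : (Metric.ball z r ∩ f).Nonempty := by
          have hzc : z ∈ closure f := frontier_subset_closure hzfr
          rw [_root_.mem_closure_iff] at hzc
          exact hzc _ Metric.isOpen_ball (Metric.mem_ball_self hr)
        rcases (hcoverPQ y' hy'f) with hy'P | hy'Q
        swap
        · rw [hQe] at hy'Q
          exact hy'Q
        rcases hy'P with hy' | hy'
        · exact hrK hy'b hy'.1
        · obtain ⟨⟨hy'f2, hy'G⟩, hy'K⟩ := hy'
          have hfrK : frontier (connectedComponentIn G.carrierᶜ y') ⊆ K := by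
            intro w hw
            by_cases hwA : w ∈ A
            · exact hAK hwA
            · exact hy'K ⟨hw, hwA⟩
          have hbfr : Metric.ball z r ∩ frontier (connectedComponentIn G.carrierᶜ y') = ∅ := by
            rw [eq_empty_iff_forall_notMem]
            rintro w ⟨hwb, hwfr⟩
            exact (hrK hwb) (hfrK hwfr)
          have hsub := hball z r y' hy'b hy'f2 hy'G hbfr
          have hzface : z ∈ connectedComponentIn G.carrierᶜ y' :=
            hsub (Metric.mem_ball_self hr)
          have hzf2 : z ∈ f := (hFace y' hy'f2 hy'G).1 hzface
          rw [hfo.frontier_eq] at hzfr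
          exact hzfr.2 hzf2
      have hcov : f ⊆ closure P ∪ closure Q := by
        intro y hy
        rcases hcoverPQ y hy with h | h
        exacts [Or.inl (subset_closure h), Or.inr (subset_closure h)]
      obtain ⟨pk, hpkK, hpkf⟩ := hKf
      have hPne : (f ∩ closure P).Nonempty :=
        ⟨pk, hpkf, subset_closure (Or.inl ⟨hpkK, hpkf⟩)⟩
      obtain ⟨y, hyf, hyP, hyQ⟩ :=
        isPreconnected_closed_iff.1 hfconn.isPreconnected (closure P) (closure Q)
          isClosed_closure isClosed_closure hcov hPne hQne
      rcases hcoverPQ y hyf with hyP' | hyQ'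
      · rcases hyP' with hy | hy
        · have hyL : y ∉ L := fun h => (hAf y hy.2) (hKL y hy.1 h)
          have hyA : y ∉ A := hAf y hy.2
          have hyLA : y ∈ (L ∪ A)ᶜ := by
            rintro (h | h)
            exacts [hyL h, hyA h]
          obtain ⟨r, hr, hrb⟩ : ∃ r > 0, Metric.ball y r ⊆ f ∩ (L ∪ A)ᶜ := by
            have hop : IsOpen (f ∩ (L ∪ A)ᶜ) := hfo.inter (hLcl.union hAcl).isOpen_compl
            exact Metric.isOpen_iff.1 hop y ⟨hy.2, hyLA⟩
          obtain ⟨q, hq1, hq2⟩ : (Metric.ball y r ∩ Q).Nonempty := by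
            rw [_root_.mem_closure_iff] at hyQ
            exact hyQ _ Metric.isOpen_ball (Metric.mem_ball_self hr)
          rcases hq2 with hq | hq
          · exact ((hrb hq1).2) (Or.inl hq.1)
          · obtain ⟨⟨hqf, hqG⟩, hqK⟩ := hq
            have hfrL : frontier (connectedComponentIn G.carrierᶜ q) \ A ⊆ L :=
              ((hFace q hqf hqG).2.2).resolve_left hqK
            have hbfr : Metric.ball y r ∩ frontier (connectedComponentIn G.carrierᶜ q) = ∅ := by
              rw [eq_empty_iff_forall_notMem]
              rintro w ⟨hwb, hwfr⟩
              by_cases hwA : w ∈ A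
              · exact ((hrb hwb).2) (Or.inr hwA)
              · exact ((hrb hwb).2) (Or.inl (hfrL ⟨hwfr, hwA⟩))
            have hsub := hball y r q hq1 hqf hqG hbfr
            have hmem : y ∈ connectedComponentIn G.carrierᶜ q :=
              hsub (Metric.mem_ball_self hr)
            exact (connectedComponentIn_subset _ _ hmem) (hKG hy.1)
        · obtain ⟨⟨hyf2, hyG⟩, hyK⟩ := hy
          obtain ⟨q, hq1, hq2⟩ : (connectedComponentIn G.carrierᶜ y ∩ Q).Nonempty := by
            rw [_root_.mem_closure_iff] at hyQ
            exact hyQ _ hGo.connectedComponentIn (mem_connectedComponentIn hyG)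
          rcases hq2 with hq | hq
          · exact (connectedComponentIn_subset _ _ hq1) (hLG hq.1)
          · obtain ⟨⟨hqf, hqG⟩, hqK⟩ := hq
            have hcomp_eq : connectedComponentIn G.carrierᶜ y =
                connectedComponentIn G.carrierᶜ q := connectedComponentIn_eq hq1
            rw [← hcomp_eq] at hqK
            exact hqK hyK
      · rcases hyQ' with hy | hy
        · have hyK : y ∉ K := fun h => (hAf y hy.2) (hKL y h hy.1)
          obtain ⟨r, hr, hrb⟩ : ∃ r > 0, Metric.ball y r ⊆ f ∩ Kᶜ := by
            have hop : IsOpen (f ∩ Kᶜ) := hfo.inter hKcl.isOpen_compl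
            exact Metric.isOpen_iff.1 hop y ⟨hy.2, hyK⟩
          obtain ⟨q, hq1, hq2⟩ : (Metric.ball y r ∩ P).Nonempty := by
            rw [_root_.mem_closure_iff] at hyP
            exact hyP _ Metric.isOpen_ball (Metric.mem_ball_self hr)
          rcases hq2 with hq | hq
          · exact ((hrb hq1).2) hq.1
          · obtain ⟨⟨hqf, hqG⟩, hqK⟩ := hq
            have hfrK : frontier (connectedComponentIn G.carrierᶜ q) ⊆ K := by
              intro w hw
              by_cases hwA : w ∈ A
              · exact hAK hwA
              · exact hqK ⟨hw, hwA⟩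
            have hbfr : Metric.ball y r ∩ frontier (connectedComponentIn G.carrierᶜ q) = ∅ := by
              rw [eq_empty_iff_forall_notMem]
              rintro w ⟨hwb, hwfr⟩
              exact ((hrb hwb).2) (hfrK hwfr)
            have hsub := hball y r q hq1 hqf hqG hbfr
            have hmem : y ∈ connectedComponentIn G.carrierᶜ q :=
              hsub (Metric.mem_ball_self hr)
            exact (connectedComponentIn_subset _ _ hmem) (hLG hy.1)
        · obtain ⟨⟨hyf2, hyG⟩, hyK⟩ := hy
          obtain ⟨q, hq1, hq2⟩ : (connectedComponentIn G.carrierᶜ y ∩ P).Nonempty := by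
            rw [_root_.mem_closure_iff] at hyP
            exact hyP _ hGo.connectedComponentIn (mem_connectedComponentIn hyG)
          rcases hq2 with hq | hq
          · exact (connectedComponentIn_subset _ _ hq1) (hKG hq.1)
          · obtain ⟨⟨hqf, hqG⟩, hqK⟩ := hq
            have hcomp_eq : connectedComponentIn G.carrierᶜ y =
                connectedComponentIn G.carrierᶜ q := connectedComponentIn_eq hq1
            rw [← hcomp_eq] at hqK
            exact hyK hqK
  refine ⟨⟨x₀, ?_, ?_⟩, hbdd⟩
  · intro hx₀G
    exact (eq_empty_iff_forall_notMem.1 hkey x₀) ⟨hx₀f, hx₀G⟩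
  · apply subset_antisymm
    · have hfG : f ⊆ G.carrierᶜ := by
        intro y hy hyG
        exact (eq_empty_iff_forall_notMem.1 hkey y) ⟨hy, hyG⟩
      exact hfconn.isPreconnected.subset_connectedComponentIn hx₀f hfG
    · have := connectedComponentIn_mono x₀ (compl_subset_compl.2 (S19.Hcar_sub G H))
      rwa [← hfeq] at this
end
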